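/- arXiv:1506.00226 — 7 statements merged into one kernel-verified Lean document; each statement's English description precedes it below -/
import Mathlib

section
/- Let a, b > 0 and v ∈ (0, 1) with 0 < v ≤ 1/2. Then (1 − v)a + v·b ≥ v(√a − √b)² + r₁(⁴√(ab) − √a)² + K(⁴√h, 2)^{r̂₁} · a^{1−v} b^{v}, where h = b/a, r = min{v, 1 − v}, r₁ = min{2r, 1 − 2r} and r̂₁ = min{2r₁, 1 − 2r₁}. -/
/-- The Kantorovich constant `K(t, 2) = (t + 1)^2 / (4 t)`. -/
noncomputable def Kant (t : ℝ) : ℝ := (t + 1) ^ 2 / (4 * t)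

lemma kant_eq (p q : ℝ) (hp : 0 < p) (hq : 0 < q) :
    Kant (q / p) = (p + q) ^ 2 / (4 * (p * q)) := by
  unfold Kant
  field_simp
  ring

lemma kantYoung_half (p q s : ℝ) (hp : 0 < p) (hq : 0 < q) (hs0 : 0 ≤ s) (hs : s ≤ 1 / 2) :
    Kant (q / p) ^ s * (p ^ (1 - s) * q ^ s) ≤ (1 - s) * p + s * q := by
  set c : ℝ := (p + q) / 2 with hc_def
  have hc : 0 < c := by positivity
  have hKpos : 0 < Kant (q / p) := by
    rw [kant_eq p q hp hq]; positivity
  have hKc : Kant (q / p) * (p * q) = c ^ 2 := by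
    rw [kant_eq p q hp hq, hc_def]; field_simp; ring
  have key : Kant (q / p) ^ s * (p ^ (1 - s) * q ^ s) = p ^ (1 - 2 * s) * c ^ (2 * s) := by
    have h1 : p ^ (1 - s) = p ^ (1 - 2 * s) * p ^ s := by
      rw [← Real.rpow_add hp]; ring_nf
    have h2 : Kant (q / p) ^ s * (p ^ s * q ^ s) = (Kant (q / p) * (p * q)) ^ s := by
      rw [Real.mul_rpow (by positivity) (by positivity),
        Real.mul_rpow hp.le hq.le]
    have h3 : (c ^ 2 : ℝ) ^ s = c ^ (2 * s) := by
      rw [← Real.rpow_natCast c 2, ← Real.rpow_mul hc.le]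
      norm_num
    calc Kant (q / p) ^ s * (p ^ (1 - s) * q ^ s)
        = p ^ (1 - 2 * s) * (Kant (q / p) ^ s * (p ^ s * q ^ s)) := by rw [h1]; ring
      _ = p ^ (1 - 2 * s) * (c ^ 2 : ℝ) ^ s := by rw [h2, hKc]
      _ = p ^ (1 - 2 * s) * c ^ (2 * s) := by rw [h3]
  have hgm := Real.geom_mean_le_arith_mean2_weighted (w₁ := 1 - 2 * s) (w₂ := 2 * s)
    (p₁ := p) (p₂ := c) (by linarith) (by linarith) hp.le hc.le (by ring)
  rw [key]
  have : (1 - 2 * s) * p + 2 * s * c = (1 - s) * p + s * q := by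
    rw [hc_def]; ring
  linarith

lemma kant_inv (t : ℝ) (ht : 0 < t) : Kant t⁻¹ = Kant t := by
  unfold Kant
  field_simp
  ring

lemma kantYoung (p q s : ℝ) (hp : 0 < p) (hq : 0 < q) (hs0 : 0 ≤ s) (hs1 : s ≤ 1) :
    Kant (q / p) ^ (min s (1 - s)) * (p ^ (1 - s) * q ^ s) ≤ (1 - s) * p + s * q := by
  rcases le_or_gt s (1 / 2) with hc | hc
  · rw [min_eq_left (by linarith)]
    exact kantYoung_half p q s hp hq hs0 hc
  · rw [min_eq_right (by linarith)]
    have H := kantYoung_half q p (1 - s) hq hp (by linarith) (by linarith)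
    have h1s : 1 - (1 - s) = s := by ring
    rw [h1s] at H
    have hsym : Kant (p / q) = Kant (q / p) := by
      rw [kant_eq p q hp hq, kant_eq q p hq hp]; ring_nf
    rw [hsym, mul_comm (q ^ s) (p ^ (1 - s))] at H
    linarith

lemma kantStep (x y w : ℝ) (hx : 0 < x) (hy : 0 < y) (hw0 : 0 ≤ w) (hw1 : w ≤ 1) :
    min w (1 - w) * (Real.sqrt x - Real.sqrt y) ^ 2
      + Kant (Real.sqrt (y / x)) ^ (min (2 * min w (1 - w)) (1 - 2 * min w (1 - w)))
        * (x ^ (1 - w) * y ^ w)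
      ≤ (1 - w) * x + w * y := by
  have hxy : 0 < x * y := by positivity
  have hsq : (Real.sqrt x - Real.sqrt y) ^ 2 = x + y - 2 * Real.sqrt (x * y) := by
    rw [sub_sq, Real.sq_sqrt hx.le, Real.sq_sqrt hy.le, mul_assoc, ← Real.sqrt_mul hx.le]
    ring
  have hsxy : 0 < Real.sqrt (x * y) := Real.sqrt_pos.mpr hxy
  rcases le_or_gt w (1 / 2) with hc | hc
  · rw [min_eq_left (by linarith)]
    have H := kantYoung x (Real.sqrt (x * y)) (2 * w) hx hsxy (by linarith) (by linarith)
    have e1 : Real.sqrt (x * y) / x = Real.sqrt (y / x) := by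
      rw [show y / x = x * y / x ^ 2 by field_simp,
        Real.sqrt_div' _ (by positivity : (0:ℝ) ≤ x ^ 2),
        Real.sqrt_sq hx.le]
    have e2 : x ^ (1 - 2 * w) * Real.sqrt (x * y) ^ (2 * w) = x ^ (1 - w) * y ^ w := by
      rw [Real.sqrt_eq_rpow, ← Real.rpow_mul hxy.le,
        show 1 / 2 * (2 * w) = w by ring,
        Real.mul_rpow hx.le hy.le, ← mul_assoc, ← Real.rpow_add hx]
      ring_nf
    rw [e1, e2] at H
    nlinarith [H, hsq]
  · rw [min_eq_right (by linarith)]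
    have H := kantYoung y (Real.sqrt (x * y)) (2 * (1 - w)) hy hsxy (by linarith) (by linarith)
    have e1 : Kant (Real.sqrt (x * y) / y) = Kant (Real.sqrt (y / x)) := by
      have : Real.sqrt (x * y) / y = (Real.sqrt (y / x))⁻¹ := by
        rw [← Real.sqrt_inv,
          show (y / x)⁻¹ = x * y / y ^ 2 by field_simp,
          Real.sqrt_div' _ (by positivity : (0:ℝ) ≤ y ^ 2),
          Real.sqrt_sq hy.le]
      rw [this, kant_inv _ (Real.sqrt_pos.mpr (by positivity))]
    have e2 : y ^ (1 - 2 * (1 - w)) * Real.sqrt (x * y) ^ (2 * (1 - w))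
        = x ^ (1 - w) * y ^ w := by
      rw [Real.sqrt_eq_rpow, ← Real.rpow_mul hxy.le,
        show 1 / 2 * (2 * (1 - w)) = 1 - w by ring,
        Real.mul_rpow hx.le hy.le, mul_left_comm, ← Real.rpow_add hy,
        show 1 - 2 * (1 - w) + (1 - w) = w by ring]
    have e3 : min (2 * (1 - w)) (1 - 2 * (1 - w)) = min (2 * (1 - w)) (1 - 2 * (1 - w)) := rfl
    rw [e1] at H
    rw [e2] at H
    nlinarith [H, hsq]

theorem stmt_0 (a b v : ℝ) (ha : 0 < a) (hb : 0 < b) (hv0 : 0 < v) (hv : v ≤ 1 / 2)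
    (h r r1 rh1 : ℝ) (hh : h = b / a) (hr : r = min v (1 - v))
    (hr1 : r1 = min (2 * r) (1 - 2 * r)) (hrh1 : rh1 = min (2 * r1) (1 - 2 * r1)) :
    (1 - v) * a + v * b ≥
      v * (Real.sqrt a - Real.sqrt b) ^ 2
        + r1 * ((a * b) ^ ((1 : ℝ) / 4) - Real.sqrt a) ^ 2
        + Kant (h ^ ((1 : ℝ) / 4)) ^ rh1 * (a ^ (1 - v) * b ^ v) := by
  have hrv : r = v := by rw [hr]; exact min_eq_left (by linarith)
  subst hrv
  have hab : 0 < a * b := by positivity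
  have hsab : 0 < Real.sqrt (a * b) := Real.sqrt_pos.mpr hab
  have H := kantStep a (Real.sqrt (a * b)) (2 * r) ha hsab (by linarith) (by linarith)
  -- identify the pieces
  have e0 : min (2 * r) (1 - 2 * r) = r1 := hr1.symm
  rw [e0] at H
  have e1 : Real.sqrt (Real.sqrt (a * b)) = (a * b) ^ ((1 : ℝ) / 4) := by
    rw [Real.sqrt_eq_rpow, Real.sqrt_eq_rpow, ← Real.rpow_mul hab.le]
    norm_num
  have e2 : Real.sqrt (Real.sqrt (a * b) / a) = h ^ ((1 : ℝ) / 4) := by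
    have ed : Real.sqrt (a * b) / a = Real.sqrt (b / a) := by
      rw [show b / a = a * b / a ^ 2 by field_simp,
        Real.sqrt_div' _ (by positivity : (0:ℝ) ≤ a ^ 2),
        Real.sqrt_sq ha.le]
    rw [ed, hh, Real.sqrt_eq_rpow, Real.sqrt_eq_rpow,
      ← Real.rpow_mul (by positivity : (0:ℝ) ≤ b / a)]
    norm_num
  have e3 : a ^ (1 - 2 * r) * Real.sqrt (a * b) ^ (2 * r) = a ^ (1 - r) * b ^ r := by
    rw [Real.sqrt_eq_rpow, ← Real.rpow_mul hab.le,
      show 1 / 2 * (2 * r) = r by ring,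
      Real.mul_rpow ha.le hb.le, ← mul_assoc, ← Real.rpow_add ha]
    ring_nf
  rw [e1, e2, e3, ← hrh1] at H
  have e4 : (Real.sqrt a - (a * b) ^ ((1:ℝ) / 4)) ^ 2
      = ((a * b) ^ ((1:ℝ) / 4) - Real.sqrt a) ^ 2 := by ring
  rw [e4] at H
  have hsq : (Real.sqrt a - Real.sqrt b) ^ 2 = a + b - 2 * Real.sqrt (a * b) := by
    rw [sub_sq, Real.sq_sqrt ha.le, Real.sq_sqrt hb.le, mul_assoc, ← Real.sqrt_mul ha.le]
    ring
  nlinarith [H, hsq]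
end

section
/- Let a, b > 0 and v ∈ (0, 1) with 1/2 < v < 1. Then (1 − v)a + v·b ≥ (1 − v)(√a − √b)² + r₁(⁴√(ab) − √b)² + K(⁴√h, 2)^{r̂₁} · a^{1−v} b^{v}, where h = b/a, r = min{v, 1 − v}, r₁ = min{2r, 1 − 2r} and r̂₁ = min{2r₁, 1 − 2r₁}. -/
lemma Kant_pos {t : ℝ} (ht : 0 < t) : 0 < Kant t := by
  unfold Kant; positivity

lemma Kant_inv {t : ℝ} (ht : 0 < t) : Kant t⁻¹ = Kant t := by
  unfold Kant
  rw [div_eq_div_iff (by positivity) (by positivity)]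
  field_simp
  ring

/-- Zuo–Shi–Fujii, half case. -/
lemma ZSF_half (x y t : ℝ) (hx : 0 < x) (hy : 0 < y) (ht0 : 0 ≤ t) (ht : t ≤ 1/2) :
    Kant (y/x) ^ t * (x ^ (1-t) * y ^ t) ≤ (1-t)*x + t*y := by
  have hK : 0 < Kant (y/x) := Kant_pos (by positivity)
  have hgm := Real.geom_mean_le_arith_mean2_weighted
    (by linarith : (0:ℝ) ≤ 1-2*t) (by linarith : (0:ℝ) ≤ 2*t) hx.le
    (by positivity : (0:ℝ) ≤ (x+y)/2) (by ring)
  have h2 : ((x+y)/2) ^ (2:ℝ) = Kant (y/x) * (x*y) := by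
    rw [show ((2:ℝ)) = ((2:ℕ):ℝ) by norm_num, Real.rpow_natCast]
    unfold Kant
    field_simp
    ring
  have hL : ((x+y)/2) ^ (2*t) = Kant (y/x) ^ t * (x ^ t * y ^ t) := by
    rw [Real.rpow_mul (by positivity), h2, Real.mul_rpow hK.le (by positivity),
      Real.mul_rpow hx.le hy.le]
  have hx1 : x ^ (1-2*t) * x ^ t = x ^ (1-t) := by
    rw [← Real.rpow_add hx]; ring_nf
  calc Kant (y/x) ^ t * (x ^ (1-t) * y ^ t)
      = x ^ (1-2*t) * ((x+y)/2) ^ (2*t) := by rw [hL, ← hx1]; ring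
    _ ≤ (1-2*t)*x + 2*t*((x+y)/2) := hgm
    _ = (1-t)*x + t*y := by ring

/-- Zuo–Shi–Fujii refinement of Young's inequality with Kantorovich constant. -/
lemma ZSF (x y t : ℝ) (hx : 0 < x) (hy : 0 < y) (ht0 : 0 ≤ t) (ht1 : t ≤ 1) :
    Kant (y/x) ^ (min t (1-t)) * (x ^ (1-t) * y ^ t) ≤ (1-t)*x + t*y := by
  rcases le_or_gt t (1/2) with hc | hc
  · rw [min_eq_left (by linarith)]
    exact ZSF_half x y t hx hy ht0 hc
  · rw [min_eq_right (by linarith)]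
    have hKe : Kant (x/y) = Kant (y/x) := by
      rw [show x/y = (y/x)⁻¹ by rw [inv_div], Kant_inv (by positivity)]
    have H := ZSF_half y x (1-t) hy hx (by linarith) (by linarith)
    rw [show (1:ℝ)-(1-t) = t by ring, hKe] at H
    calc Kant (y/x) ^ (1-t) * (x ^ (1-t) * y ^ t)
        = Kant (y/x) ^ (1-t) * (y ^ t * x ^ (1-t)) := by ring
      _ ≤ t*y + (1-t)*x := H
      _ = (1-t)*x + t*y := by ring


lemma arg_id1 (a b : ℝ) (ha : 0 < a) (hb : 0 < b) :
    ((a*b) ^ ((1:ℝ)/4) * b ^ ((1:ℝ)/2)) / ((a*b) ^ ((1:ℝ)/2)) = (b/a) ^ ((1:ℝ)/4) := by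
  obtain ⟨x, rfl⟩ : ∃ x, Real.exp x = a := ⟨Real.log a, Real.exp_log ha⟩
  obtain ⟨y, rfl⟩ : ∃ y, Real.exp y = b := ⟨Real.log b, Real.exp_log hb⟩
  simp only [← Real.exp_add, ← Real.exp_sub, ← Real.exp_mul]
  rw [Real.exp_eq_exp]; ring

lemma arg_id2 (a b : ℝ) (ha : 0 < a) (hb : 0 < b) :
    ((a*b) ^ ((1:ℝ)/4) * b ^ ((1:ℝ)/2)) / b = ((b/a) ^ ((1:ℝ)/4))⁻¹ := by
  obtain ⟨x, rfl⟩ : ∃ x, Real.exp x = a := ⟨Real.log a, Real.exp_log ha⟩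
  obtain ⟨y, rfl⟩ : ∃ y, Real.exp y = b := ⟨Real.log b, Real.exp_log hb⟩
  simp only [← Real.exp_add, ← Real.exp_sub, ← Real.exp_neg, ← Real.exp_mul]
  rw [Real.exp_eq_exp]; ring

lemma pow_id1 (a b t v : ℝ) (ha : 0 < a) (hb : 0 < b) (ht : t = 4*v-2) :
    ((a*b) ^ ((1:ℝ)/2)) ^ (1-t) * ((a*b) ^ ((1:ℝ)/4) * b ^ ((1:ℝ)/2)) ^ t
      = a ^ (1-v) * b ^ v := by
  obtain ⟨x, rfl⟩ : ∃ x, Real.exp x = a := ⟨Real.log a, Real.exp_log ha⟩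
  obtain ⟨y, rfl⟩ : ∃ y, Real.exp y = b := ⟨Real.log b, Real.exp_log hb⟩
  simp only [← Real.exp_add, ← Real.exp_mul]
  rw [Real.exp_eq_exp]; subst ht; ring

lemma pow_id2 (a b t v : ℝ) (ha : 0 < a) (hb : 0 < b) (ht : t = 4-4*v) :
    b ^ (1-t) * ((a*b) ^ ((1:ℝ)/4) * b ^ ((1:ℝ)/2)) ^ t = a ^ (1-v) * b ^ v := by
  obtain ⟨x, rfl⟩ : ∃ x, Real.exp x = a := ⟨Real.log a, Real.exp_log ha⟩
  obtain ⟨y, rfl⟩ : ∃ y, Real.exp y = b := ⟨Real.log b, Real.exp_log hb⟩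
  simp only [← Real.exp_add, ← Real.exp_mul]
  rw [Real.exp_eq_exp]; subst ht; ring

theorem stmt_1 (a b v : ℝ) (ha : 0 < a) (hb : 0 < b) (hv0 : 1 / 2 < v) (hv : v < 1)
    (h r r1 rh1 : ℝ) (hh : h = b / a) (hr : r = min v (1 - v))
    (hr1 : r1 = min (2 * r) (1 - 2 * r)) (hrh1 : rh1 = min (2 * r1) (1 - 2 * r1)) :
    (1 - v) * a + v * b ≥
      (1 - v) * (Real.sqrt a - Real.sqrt b) ^ 2
        + r1 * ((a * b) ^ ((1 : ℝ) / 4) - Real.sqrt b) ^ 2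
        + Kant (h ^ ((1 : ℝ) / 4)) ^ rh1 * (a ^ (1 - v) * b ^ v) := by
  have hrv : r = 1 - v := by rw [hr, min_eq_right (by linarith)]
  set sa := Real.sqrt a with hsa_def
  set sb := Real.sqrt b with hsb_def
  set M := (a * b) ^ ((1 : ℝ) / 4) with hM_def
  have hMpos : 0 < M := by rw [hM_def]; positivity
  have hsbpos : 0 < sb := Real.sqrt_pos.2 hb
  have hsa2 : sa ^ 2 = a := Real.sq_sqrt ha.le
  have hsb2 : sb ^ 2 = b := Real.sq_sqrt hb.le
  have hsbr : sb = b ^ ((1:ℝ)/2) := by rw [hsb_def, Real.sqrt_eq_rpow]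
  have hM2 : M ^ 2 = sa * sb := by
    rw [hsa_def, hsb_def, ← Real.sqrt_mul ha.le, Real.sqrt_eq_rpow,
      hM_def, ← Real.rpow_natCast ((a*b) ^ ((1:ℝ)/4)) 2, ← Real.rpow_mul (by positivity)]
    norm_num
  have hM2r : M ^ 2 = (a*b) ^ ((1:ℝ)/2) := by
    rw [hM_def, ← Real.rpow_natCast ((a*b) ^ ((1:ℝ)/4)) 2, ← Real.rpow_mul (by positivity)]
    norm_num
  rcases le_or_gt v (3/4) with hc | hc
  · -- case v ≤ 3/4
    have hr1v : r1 = 2*v - 1 := by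
      rw [hr1, hrv, min_eq_right (by linarith)]; ring
    set t : ℝ := 4*v - 2 with ht_def
    have hZ := ZSF (M^2) (M*sb) t (by positivity) (by positivity)
      (by rw [ht_def]; linarith) (by rw [ht_def]; linarith)
    have hmin : min t (1-t) = rh1 := by
      rw [hrh1, hr1v, ht_def]
      congr 1 <;> ring
    have harg : (M*sb)/(M^2) = h ^ ((1:ℝ)/4) := by
      rw [hM2r, hM_def, hsbr, hh]
      exact arg_id1 a b ha hb
    have hpow : (M^2) ^ (1-t) * (M*sb) ^ t = a ^ (1-v) * b ^ v := by
      rw [hM2r, hM_def, hsbr]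
      exact pow_id1 a b t v ha hb ht_def
    rw [harg, hmin, hpow] at hZ
    have eq1 : (1-v)*a + v*b - (1-v)*(sa-sb)^2 - r1*(M-sb)^2
        = (1-t)*(M^2) + t*(M*sb) := by
      rw [hr1v, ht_def]
      linear_combination (v-1)*hsa2 + (-v)*hsb2 + (2*v-2)*hM2
    rw [ge_iff_le]
    calc (1-v) * (sa - sb) ^ 2 + r1 * (M - sb) ^ 2
          + Kant (h ^ ((1:ℝ)/4)) ^ rh1 * (a ^ (1-v) * b ^ v)
        ≤ (1-v) * (sa - sb) ^ 2 + r1 * (M - sb) ^ 2 + ((1-t)*(M^2) + t*(M*sb)) :=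
          add_le_add_right hZ _
      _ = (1-v) * a + v * b := by linear_combination -eq1
  · -- case v > 3/4
    have hr1v : r1 = 2 - 2*v := by
      rw [hr1, hrv, min_eq_left (by linarith)]; ring
    set t : ℝ := 4 - 4*v with ht_def
    have hZ := ZSF b (M*sb) t hb (by positivity)
      (by rw [ht_def]; linarith) (by rw [ht_def]; linarith)
    have hmin : min t (1-t) = rh1 := by
      rw [hrh1, hr1v, ht_def]
      congr 1 <;> ring
    have harg : Kant ((M*sb)/b) = Kant (h ^ ((1:ℝ)/4)) := by
      have hargeq : (M*sb)/b = (h ^ ((1:ℝ)/4))⁻¹ := by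
        rw [hM_def, hsbr, hh]
        exact arg_id2 a b ha hb
      rw [hargeq, Kant_inv (by rw [hh]; positivity)]
    have hpow : b ^ (1-t) * (M*sb) ^ t = a ^ (1-v) * b ^ v := by
      rw [hM_def, hsbr]
      exact pow_id2 a b t v ha hb ht_def
    rw [hmin, hpow, harg] at hZ
    have eq1 : (1-v)*a + v*b - (1-v)*(sa-sb)^2 - r1*(M-sb)^2
        = (1-t)*b + t*(M*sb) := by
      rw [hr1v, ht_def]
      linear_combination (v-1)*hsa2 + (3*v-3)*hsb2 + (2*v-2)*hM2
    rw [ge_iff_le]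
    calc (1-v) * (sa - sb) ^ 2 + r1 * (M - sb) ^ 2
          + Kant (h ^ ((1:ℝ)/4)) ^ rh1 * (a ^ (1-v) * b ^ v)
        ≤ (1-v) * (sa - sb) ^ 2 + r1 * (M - sb) ^ 2 + ((1-t)*b + t*(M*sb)) :=
          add_le_add_right hZ _
      _ = (1-v) * a + v * b := by linear_combination -eq1
end

section
/- Let a, b > 0 and v ∈ (0, 1). Then (a + b)/2 ≥ r(√a − √b)² + (1/2)·r₁·[(⁴√(ab) − √a)² + (⁴√(ab) − √b)²] + K(⁴√h, 2)^{r̂₁} · H_v(a, b), where h = b/a, r = min{v, 1 − v}, r₁ = min{2r, 1 − 2r} and r̂₁ = min{2r₁, 1 − 2r₁}. -/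
lemma eq_of_log_eq {a b : ℝ} (ha : 0 < a) (hb : 0 < b)
    (h : Real.log a = Real.log b) : a = b := by
  rw [← Real.exp_log ha, ← Real.exp_log hb, h]

lemma log_Kant {x y : ℝ} (hx : 0 < x) (hy : 0 < y) :
    Real.log (Kant (y / x)) = 2 * Real.log ((x + y) / 2) - Real.log x - Real.log y := by
  have key : Kant (y / x) = ((x + y) / 2) ^ 2 / (x * y) := by
    unfold Kant; field_simp; ring
  rw [key, Real.log_div (by positivity) (by positivity), Real.log_pow,
    Real.log_mul hx.ne' hy.ne']
  push_cast; ring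

lemma kantYoung_s2 {x y μ : ℝ} (hx : 0 < x) (hy : 0 < y) (h0 : 0 ≤ μ) (h1 : μ ≤ 1) :
    Kant (y / x) ^ min μ (1 - μ) * (x ^ (1 - μ) * y ^ μ) ≤ (1 - μ) * x + μ * y := by
  have hK : 0 < Kant (y / x) := Kant_pos (by positivity)
  rcases le_total μ (1 / 2) with hc | hc
  · rw [min_eq_left (by linarith)]
    have amgm := Real.geom_mean_le_arith_mean2_weighted
      (by linarith : (0:ℝ) ≤ 1 - 2 * μ) (by linarith : (0:ℝ) ≤ 2 * μ)
      hx.le (by positivity : (0:ℝ) ≤ (x + y) / 2) (by ring)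
    have heq : Kant (y / x) ^ μ * (x ^ (1 - μ) * y ^ μ)
        = x ^ (1 - 2 * μ) * ((x + y) / 2) ^ (2 * μ) := by
      apply eq_of_log_eq (by positivity) (by positivity)
      rw [Real.log_mul (by positivity) (by positivity),
        Real.log_mul (by positivity) (by positivity),
        Real.log_mul (by positivity) (by positivity),
        Real.log_rpow hK, Real.log_rpow hx, Real.log_rpow hy,
        Real.log_rpow hx, Real.log_rpow (by positivity),
        log_Kant hx hy]
      ring
    rw [heq]
    calc x ^ (1 - 2 * μ) * ((x + y) / 2) ^ (2 * μ)
        ≤ (1 - 2 * μ) * x + (2 * μ) * ((x + y) / 2) := amgm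
      _ = (1 - μ) * x + μ * y := by ring
  · rw [min_eq_right (by linarith)]
    have amgm := Real.geom_mean_le_arith_mean2_weighted
      (by linarith : (0:ℝ) ≤ 2 * μ - 1) (by linarith : (0:ℝ) ≤ 2 - 2 * μ)
      hy.le (by positivity : (0:ℝ) ≤ (x + y) / 2) (by ring)
    have heq : Kant (y / x) ^ (1 - μ) * (x ^ (1 - μ) * y ^ μ)
        = y ^ (2 * μ - 1) * ((x + y) / 2) ^ (2 - 2 * μ) := by
      apply eq_of_log_eq (by positivity) (by positivity)
      rw [Real.log_mul (by positivity) (by positivity),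
        Real.log_mul (by positivity) (by positivity),
        Real.log_mul (by positivity) (by positivity),
        Real.log_rpow hK, Real.log_rpow hx, Real.log_rpow hy,
        Real.log_rpow hy, Real.log_rpow (by positivity),
        log_Kant hx hy]
      ring
    rw [heq]
    calc y ^ (2 * μ - 1) * ((x + y) / 2) ^ (2 - 2 * μ)
        ≤ (2 * μ - 1) * y + (2 - 2 * μ) * ((x + y) / 2) := amgm
      _ = (1 - μ) * x + μ * y := by ring

lemma pairLemma {x g l : ℝ} (hx : 0 < x) (hg : 0 < g) (h0 : 0 ≤ l) (h1 : l ≤ 1) :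
    min l (1 - l) * (Real.sqrt x - Real.sqrt g) ^ 2
      + Kant ((g / x) ^ ((1 : ℝ) / 2)) ^ min (2 * min l (1 - l)) (1 - 2 * min l (1 - l))
        * (x ^ (1 - l) * g ^ l)
      ≤ (1 - l) * x + l * g := by
  have hxg : 0 < x * g := by positivity
  have hs : Real.sqrt x * Real.sqrt g = Real.sqrt (x * g) := (Real.sqrt_mul hx.le g).symm
  have hsp : 0 < Real.sqrt (x * g) := Real.sqrt_pos.mpr hxg
  have hsq : (Real.sqrt x - Real.sqrt g) ^ 2 = x + g - 2 * Real.sqrt (x * g) := by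
    have h1' := Real.sq_sqrt hx.le
    have h2' := Real.sq_sqrt hg.le
    linear_combination h1' + h2' - 2 * hs
  rcases le_total l (1 / 2) with hc | hc
  · rw [min_eq_left (by linarith)]
    have Y := kantYoung_s2 (x := x) (y := Real.sqrt (x * g)) (μ := 2 * l) hx hsp
      (by linarith) (by linarith)
    have e1 : Real.sqrt (x * g) / x = (g / x) ^ ((1 : ℝ) / 2) := by
      apply eq_of_log_eq (by positivity) (by positivity)
      rw [Real.log_div hsp.ne' hx.ne', Real.log_sqrt hxg.le,
        Real.log_mul hx.ne' hg.ne', Real.log_rpow (by positivity),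
        Real.log_div hg.ne' hx.ne']
      ring
    have e2 : x ^ (1 - 2 * l) * Real.sqrt (x * g) ^ (2 * l) = x ^ (1 - l) * g ^ l := by
      apply eq_of_log_eq (by positivity) (by positivity)
      rw [Real.log_mul (by positivity) (by positivity),
        Real.log_mul (by positivity) (by positivity),
        Real.log_rpow hx, Real.log_rpow hsp, Real.log_rpow hx, Real.log_rpow hg,
        Real.log_sqrt hxg.le, Real.log_mul hx.ne' hg.ne']
      ring
    rw [e1, e2] at Y
    rw [hsq]
    linarith
  · rw [min_eq_right (by linarith)]
    have Y := kantYoung_s2 (x := g) (y := Real.sqrt (x * g)) (μ := 2 - 2 * l) hg hsp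
      (by linarith) (by linarith)
    have e1 : Real.sqrt (x * g) / g = ((g / x) ^ ((1 : ℝ) / 2))⁻¹ := by
      apply eq_of_log_eq (by positivity) (by positivity)
      rw [Real.log_inv, Real.log_div hsp.ne' hg.ne', Real.log_sqrt hxg.le,
        Real.log_mul hx.ne' hg.ne', Real.log_rpow (by positivity),
        Real.log_div hg.ne' hx.ne']
      ring
    have e2 : g ^ (1 - (2 - 2 * l)) * Real.sqrt (x * g) ^ (2 - 2 * l)
        = x ^ (1 - l) * g ^ l := by
      apply eq_of_log_eq (by positivity) (by positivity)
      rw [Real.log_mul (by positivity) (by positivity),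
        Real.log_mul (by positivity) (by positivity),
        Real.log_rpow hg, Real.log_rpow hsp, Real.log_rpow hx, Real.log_rpow hg,
        Real.log_sqrt hxg.le, Real.log_mul hx.ne' hg.ne']
      ring
    have eexp : min (2 - 2 * l) (1 - (2 - 2 * l)) = min (2 * (1 - l)) (1 - 2 * (1 - l)) := by
      rw [show (2 - 2 * l) = 2 * (1 - l) by ring]
    rw [e1, Kant_inv (by positivity), e2, eexp] at Y
    rw [hsq]
    linarith

lemma mainHalf (a b v : ℝ) (ha : 0 < a) (hb : 0 < b) (hv0 : 0 < v) (hc : v ≤ 1 / 2) :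
    (a + b) / 2 ≥
      v * (Real.sqrt a - Real.sqrt b) ^ 2
        + 1 / 2 * min (2 * v) (1 - 2 * v) * (((a * b) ^ ((1 : ℝ) / 4) - Real.sqrt a) ^ 2
            + ((a * b) ^ ((1 : ℝ) / 4) - Real.sqrt b) ^ 2)
        + Kant ((b / a) ^ ((1 : ℝ) / 4))
            ^ min (2 * min (2 * v) (1 - 2 * v)) (1 - 2 * min (2 * v) (1 - 2 * v))
          * ((a ^ v * b ^ (1 - v) + a ^ (1 - v) * b ^ v) / 2) := by
  have hab : 0 < a * b := by positivity
  set G := Real.sqrt (a * b) with hGdef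
  have hG : 0 < G := Real.sqrt_pos.mpr hab
  have hlogG : Real.log G = Real.log (a * b) / 2 := by rw [hGdef]; exact Real.log_sqrt hab.le
  have hG4 : (a * b) ^ ((1 : ℝ) / 4) = Real.sqrt G := by
    apply eq_of_log_eq (by positivity) (by positivity)
    rw [Real.log_rpow hab, Real.log_sqrt hG.le, hlogG]
    ring
  have P1 := pairLemma (x := a) (g := G) (l := 2 * v) ha hG (by linarith) (by linarith)
  have P2 := pairLemma (x := b) (g := G) (l := 2 * v) hb hG (by linarith) (by linarith)
  have cA : (G / a) ^ ((1 : ℝ) / 2) = (b / a) ^ ((1 : ℝ) / 4) := by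
    apply eq_of_log_eq (by positivity) (by positivity)
    rw [Real.log_rpow (by positivity), Real.log_rpow (by positivity),
      Real.log_div hG.ne' ha.ne', Real.log_div hb.ne' ha.ne', hlogG,
      Real.log_mul ha.ne' hb.ne']
    ring
  have cB : (G / b) ^ ((1 : ℝ) / 2) = ((b / a) ^ ((1 : ℝ) / 4))⁻¹ := by
    apply eq_of_log_eq (by positivity) (by positivity)
    rw [Real.log_inv, Real.log_rpow (by positivity), Real.log_rpow (by positivity),
      Real.log_div hG.ne' hb.ne', Real.log_div hb.ne' ha.ne', hlogG,
      Real.log_mul ha.ne' hb.ne']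
    ring
  have eA : a ^ (1 - 2 * v) * G ^ (2 * v) = a ^ (1 - v) * b ^ v := by
    apply eq_of_log_eq (by positivity) (by positivity)
    rw [Real.log_mul (by positivity) (by positivity),
      Real.log_mul (by positivity) (by positivity),
      Real.log_rpow ha, Real.log_rpow hG, Real.log_rpow ha, Real.log_rpow hb, hlogG,
      Real.log_mul ha.ne' hb.ne']
    ring
  have eB : b ^ (1 - 2 * v) * G ^ (2 * v) = a ^ v * b ^ (1 - v) := by
    apply eq_of_log_eq (by positivity) (by positivity)
    rw [Real.log_mul (by positivity) (by positivity),
      Real.log_mul (by positivity) (by positivity),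
      Real.log_rpow hb, Real.log_rpow hG, Real.log_rpow ha, Real.log_rpow hb, hlogG,
      Real.log_mul ha.ne' hb.ne']
    ring
  rw [cA, eA] at P1
  rw [cB, Kant_inv (by positivity), eB] at P2
  have hs' : Real.sqrt a * Real.sqrt b = G := by
    rw [hGdef]; exact (Real.sqrt_mul ha.le b).symm
  have hsq : (Real.sqrt a - Real.sqrt b) ^ 2 = a + b - 2 * G := by
    have h1' := Real.sq_sqrt ha.le
    have h2' := Real.sq_sqrt hb.le
    linear_combination h1' + h2' - 2 * hs'
  have s1 : (Real.sqrt G - Real.sqrt a) ^ 2 = (Real.sqrt a - Real.sqrt G) ^ 2 := by ring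
  have s2 : (Real.sqrt G - Real.sqrt b) ^ 2 = (Real.sqrt b - Real.sqrt G) ^ 2 := by ring
  have hdist : Kant ((b / a) ^ ((1 : ℝ) / 4))
        ^ min (2 * min (2 * v) (1 - 2 * v)) (1 - 2 * min (2 * v) (1 - 2 * v))
      * ((a ^ v * b ^ (1 - v) + a ^ (1 - v) * b ^ v) / 2)
      = (Kant ((b / a) ^ ((1 : ℝ) / 4))
          ^ min (2 * min (2 * v) (1 - 2 * v)) (1 - 2 * min (2 * v) (1 - 2 * v))
          * (a ^ (1 - v) * b ^ v)
        + Kant ((b / a) ^ ((1 : ℝ) / 4))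
          ^ min (2 * min (2 * v) (1 - 2 * v)) (1 - 2 * min (2 * v) (1 - 2 * v))
          * (a ^ v * b ^ (1 - v))) / 2 := by ring
  rw [hG4, s1, s2, hsq, hdist]
  linarith

theorem stmt_2 (a b v : ℝ) (ha : 0 < a) (hb : 0 < b) (hv0 : 0 < v) (hv : v < 1)
    (h r r1 rh1 : ℝ) (hh : h = b / a) (hr : r = min v (1 - v))
    (hr1 : r1 = min (2 * r) (1 - 2 * r)) (hrh1 : rh1 = min (2 * r1) (1 - 2 * r1)) :
    (a + b) / 2 ≥
      r * (Real.sqrt a - Real.sqrt b) ^ 2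
        + 1 / 2 * r1 * (((a * b) ^ ((1 : ℝ) / 4) - Real.sqrt a) ^ 2
            + ((a * b) ^ ((1 : ℝ) / 4) - Real.sqrt b) ^ 2)
        + Kant (h ^ ((1 : ℝ) / 4)) ^ rh1 * ((a ^ v * b ^ (1 - v) + a ^ (1 - v) * b ^ v) / 2) := by
  subst hh hr hr1 hrh1
  rcases le_total v (1 / 2) with hc | hc
  · rw [min_eq_left (by linarith : v ≤ 1 - v)]
    exact mainHalf a b v ha hb hv0 hc
  · rw [min_eq_right (by linarith : 1 - v ≤ v)]
    have H := mainHalf a b (1 - v) ha hb (by linarith) (by linarith)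
    have e : 1 - (1 - v) = v := by ring
    rw [e] at H
    rw [show a ^ (1 - v) * b ^ v + a ^ v * b ^ (1 - v)
        = a ^ v * b ^ (1 - v) + a ^ (1 - v) * b ^ v from add_comm _ _] at H
    exact H
end

section
/- Let a, b > 0 and v ∈ (0, 1) with 1/2 < v < 1. Then ((1 − v)a + v·b)² ≥ (1 − v)²(a − b)² + r₁(√(ab) − b)² + K(√h, 2)^{r̂₁} · (a^{1−v} b^{v})², where h = b/a, r = min{v, 1 − v}, r₁ = min{2r, 1 − 2r} and r̂₁ = min{2r₁, 1 − 2r₁}. -/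
lemma zuo (x ν : ℝ) (hx : 0 < x) (h0 : 0 ≤ ν) (h1 : ν ≤ 1) :
    x ^ ν * Kant x ^ (min ν (1 - ν)) ≤ 1 - ν + ν * x := by
  have hx1 : (0:ℝ) < (x + 1) / 2 := by linarith
  rcases le_or_gt ν (1/2) with hc | hc
  · have hm : min ν (1 - ν) = ν := min_eq_left (by linarith)
    rw [hm]
    have key : x ^ ν * Kant x ^ ν = ((x + 1) / 2) ^ (2 * ν) := by
      rw [← Real.mul_rpow hx.le (Kant_pos hx).le]
      have : x * Kant x = ((x + 1) / 2) ^ (2:ℕ) := by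
        unfold Kant
        field_simp
        ring
      rw [this, ← Real.rpow_natCast ((x+1)/2) 2, ← Real.rpow_mul hx1.le]
      norm_num
    rw [key]
    have := Real.geom_mean_le_arith_mean2_weighted (by linarith : (0:ℝ) ≤ 2*ν)
      (by linarith : (0:ℝ) ≤ 1 - 2*ν) hx1.le (by norm_num : (0:ℝ) ≤ 1) (by ring)
    rw [Real.one_rpow, mul_one] at this
    linarith
  · have hm : min ν (1 - ν) = 1 - ν := min_eq_right (by linarith)
    rw [hm]
    have key : x ^ ν * Kant x ^ (1 - ν) = x ^ (2*ν - 1) * ((x + 1) / 2) ^ (2 - 2*ν) := by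
      have hK : Kant x = ((x + 1) / 2) ^ (2:ℕ) / x := by
        unfold Kant
        rw [div_eq_div_iff (by positivity) hx.ne']
        ring
      rw [hK, Real.div_rpow (by positivity) hx.le,
        ← Real.rpow_natCast ((x+1)/2) 2, ← Real.rpow_mul hx1.le,
        div_eq_mul_inv, ← Real.rpow_neg hx.le, mul_comm (((x+1)/2) ^ ((2:ℕ) * (1-ν))),
        ← mul_assoc, ← Real.rpow_add hx]
      norm_num
      ring_nf
    rw [key]
    have := Real.geom_mean_le_arith_mean2_weighted (by linarith : (0:ℝ) ≤ 2*ν - 1)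
      (by linarith : (0:ℝ) ≤ 2 - 2*ν) hx.le hx1.le (by ring)
    linarith

lemma zuo2 (a b ν : ℝ) (ha : 0 < a) (hb : 0 < b) (h0 : 0 ≤ ν) (h1 : ν ≤ 1) :
    Kant (b / a) ^ (min ν (1 - ν)) * (a ^ (1 - ν) * b ^ ν) ≤ (1 - ν) * a + ν * b := by
  have hba : 0 < b / a := div_pos hb ha
  have H := zuo (b / a) ν hba h0 h1
  have H2 := mul_le_mul_of_nonneg_left H ha.le
  calc Kant (b / a) ^ (min ν (1 - ν)) * (a ^ (1 - ν) * b ^ ν)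
      = a * ((b / a) ^ ν * Kant (b / a) ^ (min ν (1 - ν))) := by
        rw [Real.div_rpow hb.le ha.le, Real.rpow_sub ha, Real.rpow_one]
        have hane : a ^ ν ≠ 0 := by positivity
        field_simp
    _ ≤ a * (1 - ν + ν * (b / a)) := H2
    _ = (1 - ν) * a + ν * b := by field_simp

lemma prod_eq (a b : ℝ) (ha : 0 < a) (hb : 0 < b) (p q : ℝ) :
    (a * b) ^ p * (Real.sqrt (a * b) * b) ^ q
      = a ^ (p + 1/2 * q) * b ^ (p + 1/2 * q + q) := by
  have hab : (0:ℝ) < a * b := mul_pos ha hb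
  rw [Real.mul_rpow (Real.sqrt_nonneg _) hb.le, Real.sqrt_eq_rpow,
    ← Real.rpow_mul hab.le, Real.mul_rpow ha.le hb.le, Real.mul_rpow ha.le hb.le,
    Real.rpow_add ha, Real.rpow_add hb, Real.rpow_add hb]
  ring

lemma prod_eq2 (a b : ℝ) (ha : 0 < a) (hb : 0 < b) (p q : ℝ) :
    (b ^ 2) ^ p * (Real.sqrt (a * b) * b) ^ q
      = a ^ (1/2 * q) * b ^ (2 * p + 1/2 * q + q) := by
  have hab : (0:ℝ) < a * b := mul_pos ha hb
  rw [Real.mul_rpow (Real.sqrt_nonneg _) hb.le, Real.sqrt_eq_rpow,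
    ← Real.rpow_mul hab.le, Real.mul_rpow ha.le hb.le,
    ← Real.rpow_natCast b 2, ← Real.rpow_mul hb.le,
    Real.rpow_add hb, Real.rpow_add hb]
  push_cast
  ring

theorem stmt_4 (a b v : ℝ) (ha : 0 < a) (hb : 0 < b) (hv0 : 1 / 2 < v) (hv : v < 1)
    (h r r1 rh1 : ℝ) (hh : h = b / a) (hr : r = min v (1 - v))
    (hr1 : r1 = min (2 * r) (1 - 2 * r)) (hrh1 : rh1 = min (2 * r1) (1 - 2 * r1)) :
    ((1 - v) * a + v * b) ^ 2 ≥
      (1 - v) ^ 2 * (a - b) ^ 2 + r1 * (Real.sqrt (a * b) - b) ^ 2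
        + Kant (Real.sqrt h) ^ rh1 * (a ^ (1 - v) * b ^ v) ^ 2 := by
  have hrv : r = 1 - v := by rw [hr, min_eq_right (by linarith)]
  have hab : (0:ℝ) < a * b := mul_pos ha hb
  have hspos : 0 < Real.sqrt (a * b) := Real.sqrt_pos.mpr hab
  have hsb : 0 < Real.sqrt (a * b) * b := mul_pos hspos hb
  have hs2 : Real.sqrt (a * b) ^ 2 = a * b := Real.sq_sqrt hab.le
  have hsqa : Real.sqrt a * Real.sqrt a = a := Real.mul_self_sqrt ha.le
  have hsqb : Real.sqrt b * Real.sqrt b = b := Real.mul_self_sqrt hb.le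
  have hsmul : Real.sqrt (a * b) = Real.sqrt a * Real.sqrt b := Real.sqrt_mul ha.le b
  have habsq : (a ^ (1 - v) * b ^ v) ^ 2 = a ^ (2 - 2 * v) * b ^ (2 * v) := by
    rw [mul_pow, sq (a ^ (1 - v)), sq (b ^ v), ← Real.rpow_add ha, ← Real.rpow_add hb]
    ring_nf
  have hmain : r1 * (Real.sqrt (a * b) - b) ^ 2
      + Kant (Real.sqrt h) ^ rh1 * (a ^ (2 - 2*v) * b ^ (2*v))
      ≤ 2 * (1 - v) * (a * b) + (2 * v - 1) * b ^ 2 := by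
    rcases le_or_gt v (3/4) with hc | hc
    · have hr1v : r1 = 2 * v - 1 := by
        rw [hr1, hrv, min_eq_right (by linarith)]; ring
      have hrh1v : rh1 = min (4 * v - 2) (1 - (4 * v - 2)) := by
        rw [hrh1, hr1v]; congr 1 <;> ring
      have Z := zuo2 (a * b) (Real.sqrt (a * b) * b) (4 * v - 2) hab hsb
        (by linarith) (by linarith)
      have harg : Real.sqrt (a * b) * b / (a * b) = Real.sqrt (b / a) := by
        rw [Real.sqrt_div hb.le, hsmul, div_eq_div_iff (by positivity) (by positivity)]
        linear_combination Real.sqrt b * b * hsqa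
      rw [harg, prod_eq a b ha hb (1 - (4 * v - 2)) (4 * v - 2),
        show (1 - (4 * v - 2)) + 1/2 * (4 * v - 2) + (4 * v - 2) = 2 * v from by ring,
        show (1 - (4 * v - 2)) + 1/2 * (4 * v - 2) = 2 - 2 * v from by ring] at Z
      rw [hh, hr1v, hrh1v]
      nlinarith [Z, hs2]
    · have hr1v : r1 = 2 - 2 * v := by
        rw [hr1, hrv, min_eq_left (by linarith)]; ring
      have hrh1v : rh1 = min (4 - 4 * v) (1 - (4 - 4 * v)) := by
        rw [hrh1, hr1v]; congr 1 <;> ring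
      have Z := zuo2 (b ^ 2) (Real.sqrt (a * b) * b) (4 - 4 * v) (by positivity) hsb
        (by linarith) (by linarith)
      have harg : Real.sqrt (a * b) * b / (b ^ 2) = Real.sqrt (a / b) := by
        rw [Real.sqrt_div ha.le, hsmul, div_eq_div_iff (by positivity) (by positivity)]
        linear_combination Real.sqrt a * b * hsqb
      have hKinv : Kant (Real.sqrt (a / b)) = Kant (Real.sqrt (b / a)) := by
        rw [show a / b = (b / a)⁻¹ from by rw [inv_div], Real.sqrt_inv]
        exact Kant_inv (Real.sqrt_pos.mpr (div_pos hb ha))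
      rw [harg, hKinv, prod_eq2 a b ha hb (1 - (4 - 4 * v)) (4 - 4 * v),
        show 2 * (1 - (4 - 4 * v)) + 1/2 * (4 - 4 * v) + (4 - 4 * v) = 2 * v from by ring,
        show 1/2 * (4 - 4 * v) = 2 - 2 * v from by ring] at Z
      rw [hh, hr1v, hrh1v]
      nlinarith [Z, hs2]
  have hid : ((1 - v) * a + v * b) ^ 2
      = (1 - v) ^ 2 * (a - b) ^ 2 + (2 * (1 - v) * (a * b) + (2 * v - 1) * b ^ 2) := by
    ring
  rw [ge_iff_le, habsq]
  linarith
end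

section
/- Let a, b > 0 and v ∈ (0, 1) with 0 < v ≤ 1/2. Then ((1 − v)a + v·b)² ≤ (1 − v)²(a − b)² − r₁(√(ab) − b)² + K(√h, 2)^{−r̂₁} · (a^{1−v} b^{v})², where h = b/a, r = min{v, 1 − v}, r₁ = min{2r, 1 − 2r} and r̂₁ = min{2r₁, 1 − 2r₁}. -/
/-- Zuo–Shi–Fujii type lemma: `K(s)^{min(μ,1-μ)} s^μ ≤ μ s + (1-μ)`. -/
lemma zsf (s μ : ℝ) (hs : 0 < s) (h0 : 0 ≤ μ) (h1 : μ ≤ 1) :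
    Kant s ^ min μ (1 - μ) * s ^ μ ≤ μ * s + (1 - μ) := by
  have hs' : (0:ℝ) ≤ s := hs.le
  have hK : (0:ℝ) ≤ Kant s := (Kant_pos hs).le
  have hKs : Kant s * s = ((s + 1) / 2) ^ (2:ℕ) := by
    rw [Kant, div_mul_eq_mul_div, div_eq_iff (by positivity)]; ring
  rcases le_or_gt μ (1/2) with hμ | hμ
  · have hmin : min μ (1 - μ) = μ := min_eq_left (by linarith)
    rw [hmin, ← Real.mul_rpow hK hs', hKs]
    have he : ((((s+1)/2) ^ (2:ℕ) : ℝ)) ^ μ = ((s+1)/2) ^ (2*μ) := by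
      rw [← Real.rpow_natCast ((s+1)/2) 2, ← Real.rpow_mul (by positivity)]
      norm_num
    rw [he]
    have hm := Real.geom_mean_le_arith_mean2_weighted (w₁ := 2*μ) (w₂ := 1 - 2*μ)
      (p₁ := (s+1)/2) (p₂ := 1) (by linarith) (by linarith) (by positivity)
      zero_le_one (by ring)
    rw [Real.one_rpow] at hm
    calc ((s+1)/2) ^ (2*μ) = ((s+1)/2) ^ (2*μ) * 1 := by ring
    _ ≤ 2*μ * ((s+1)/2) + (1-2*μ) * 1 := hm
    _ = μ * s + (1 - μ) := by ring
  · have hmin : min μ (1 - μ) = 1 - μ := min_eq_right (by linarith)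
    rw [hmin]
    have hsplit : s ^ μ = s ^ (1 - μ) * s ^ (2*μ - 1) := by
      rw [← Real.rpow_add hs]; ring_nf
    rw [hsplit, ← mul_assoc, ← Real.mul_rpow hK hs', hKs]
    have he : ((((s+1)/2) ^ (2:ℕ) : ℝ)) ^ (1 - μ) = ((s+1)/2) ^ (2 - 2*μ) := by
      rw [← Real.rpow_natCast ((s+1)/2) 2, ← Real.rpow_mul (by positivity)]
      norm_num; ring_nf
    rw [he]
    have hm := Real.geom_mean_le_arith_mean2_weighted (w₁ := 2 - 2*μ) (w₂ := 2*μ - 1)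
      (p₁ := (s+1)/2) (p₂ := s) (by linarith) (by linarith) (by positivity) hs' (by ring)
    calc ((s+1)/2) ^ (2-2*μ) * s ^ (2*μ-1) ≤ (2-2*μ) * ((s+1)/2) + (2*μ-1) * s := hm
    _ = μ * s + (1 - μ) := by ring

/-- One-step refined version. -/
lemma lemA (t l : ℝ) (ht : 0 < t) (h0 : 0 ≤ l) (h1 : l ≤ 1) :
    Kant t ^ min (2 * min l (1-l)) (1 - 2 * min l (1-l)) * t ^ (2*l)
      ≤ l * t^2 + (1 - l) - min l (1-l) * (t-1)^2 := by
  rcases le_or_gt l (1/2) with hl | hl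
  · have hmin : min l (1-l) = l := min_eq_left (by linarith)
    rw [hmin]
    have hz := zsf t (2*l) ht (by linarith) (by linarith)
    have hme : min (2*l) (1 - 2*l) = min (2*l) (1 - (2*l)) := by norm_num
    calc Kant t ^ min (2*l) (1-2*l) * t ^ (2*l)
        ≤ 2*l*t + (1-2*l) := by rw [hme]; exact hz
    _ = l * t^2 + (1-l) - l*(t-1)^2 := by ring
  · have hmin : min l (1-l) = 1 - l := min_eq_right (by linarith)
    rw [hmin]
    have hz := zsf t (2*l - 1) ht (by linarith) (by linarith)
    have hmc : min (2*(1-l)) (1 - 2*(1-l)) = min (2*l-1) (1-(2*l-1)) := by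
      rw [min_comm]; congr 1 <;> ring
    rw [hmc]
    have ht' : t ^ (2*l-1) * t = t ^ (2*l) := by
      rw [← Real.rpow_add_one ht.ne']; ring_nf
    calc Kant t ^ min (2*l-1) (1-(2*l-1)) * t ^ (2*l)
        = (Kant t ^ min (2*l-1) (1-(2*l-1)) * t ^ (2*l-1)) * t := by rw [← ht']; ring
    _ ≤ ((2*l-1)*t + (1 - (2*l-1))) * t := mul_le_mul_of_nonneg_right hz ht.le
    _ = l * t^2 + (1-l) - (1-l)*(t-1)^2 := by ring

theorem stmt_8 (a b v : ℝ) (ha : 0 < a) (hb : 0 < b) (hv0 : 0 < v) (hv : v ≤ 1 / 2)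
    (h r r1 rh1 : ℝ) (hh : h = b / a) (hr : r = min v (1 - v))
    (hr1 : r1 = min (2 * r) (1 - 2 * r)) (hrh1 : rh1 = min (2 * r1) (1 - 2 * r1)) :
    ((1 - v) * a + v * b) ^ 2 ≤
      (1 - v) ^ 2 * (a - b) ^ 2 - r1 * (Real.sqrt (a * b) - b) ^ 2
        + Kant (Real.sqrt h) ^ (-rh1) * (a ^ (1 - v) * b ^ v) ^ 2 := by
  have hh0 : 0 < h := by rw [hh]; positivity
  set t := Real.sqrt h with htd
  have ht : 0 < t := Real.sqrt_pos.mpr hh0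
  have ht2 : t ^ 2 = h := Real.sq_sqrt hh0.le
  have hab : b = a * t ^ 2 := by rw [ht2, hh]; field_simp
  have hre : r = v := by rw [hr]; exact min_eq_left (by linarith)
  have hr1e : r1 = min (1-2*v) (1-(1-2*v)) := by
    rw [hr1, hre, min_comm]; congr 1 <;> ring
  have hA := lemA t (1-2*v) ht (by linarith) (by linarith)
  rw [← hr1e, ← hrh1] at hA
  set A : ℝ := (1-2*v) * t^2 + (1-(1-2*v)) - r1*(t-1)^2 with hAdef
  have hKt : 0 < Kant t := Kant_pos ht
  have hD : 0 < Kant t ^ rh1 * t ^ (2*(1-2*v)) :=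
    mul_pos (Real.rpow_pos_of_pos hKt _) (Real.rpow_pos_of_pos ht _)
  have hApos : 0 < A := lt_of_lt_of_le hD hA
  -- geometric term
  have hgeom : (a ^ (1-v) * b ^ v) ^ 2 = a^2 * (t ^ (2*v))^2 := by
    have hbv : b ^ v = a ^ v * t ^ (2*v) := by
      rw [hab, Real.mul_rpow ha.le (by positivity), ← Real.rpow_natCast t 2,
        ← Real.rpow_mul ht.le]
      norm_num
    rw [hbv, show a ^ (1-v) * (a ^ v * t ^ (2*v)) = (a ^ (1-v) * a ^ v) * t ^ (2*v) by ring,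
      ← Real.rpow_add ha, show (1-v) + v = (1:ℝ) by ring, Real.rpow_one]
    ring
  have hcomb : t ^ (2*v) * t ^ (2*v) * t ^ (2*(1-2*v)) = t ^ 2 := by
    rw [← Real.rpow_add ht, ← Real.rpow_add ht,
      show 2*v + 2*v + 2*(1-2*v) = ((2:ℕ):ℝ) by push_cast; ring, Real.rpow_natCast]
  have hkey : (Kant t ^ (-rh1) * (a ^ (1-v) * b ^ v) ^ 2) * (Kant t ^ rh1 * t ^ (2*(1-2*v)))
      = a^2 * t^2 := by
    rw [hgeom, Real.rpow_neg hKt.le]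
    have h1 : (Kant t ^ rh1)⁻¹ * (a^2 * (t^(2*v))^2) * (Kant t ^ rh1 * t ^ (2*(1-2*v)))
        = a^2 * (t ^ (2*v) * t ^ (2*v) * t ^ (2*(1-2*v))) * ((Kant t ^ rh1)⁻¹ * (Kant t ^ rh1)) := by
      ring
    rw [h1, hcomb, inv_mul_cancel₀ (ne_of_gt (Real.rpow_pos_of_pos hKt _))]
    ring
  have hgpos : 0 ≤ Kant t ^ (-rh1) * (a ^ (1-v) * b ^ v) ^ 2 := by positivity
  have hlow : a^2*t^2 / A ≤ Kant t ^ (-rh1) * (a ^ (1-v) * b ^ v) ^ 2 := by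
    rw [div_le_iff₀ hApos]
    calc a^2*t^2 = _ := hkey.symm
    _ ≤ (Kant t ^ (-rh1) * (a ^ (1-v) * b ^ v) ^ 2) * A :=
      mul_le_mul_of_nonneg_left hA hgpos
  have hsab : Real.sqrt (a*b) = a*t := by
    rw [hab, show a*(a*t^2) = (a*t)^2 by ring, Real.sqrt_sq (by positivity)]
  have h2 : ((1-v)*a + v*b)^2 - ((1-v)^2*(a-b)^2 - r1*(a*t-b)^2) ≤ a^2*t^2 / A := by
    rw [le_div_iff₀ hApos, hab, hAdef]
    nlinarith [sq_nonneg (a*t*(((1-2*v) * t^2 + (1-(1-2*v)) - r1*(t-1)^2) - 1))]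
  rw [hsab]
  linarith [h2, hlow]
end

section
/- Let a, b > 0 and v ∈ (0, 1) with 1/2 < v < 1. Then ((1 − v)a + v·b)² ≤ v²(a − b)² − r₁(√(ab) − a)² + K(√h, 2)^{−r̂₁} · (a^{1−v} b^{v})², where h = b/a, r = min{v, 1 − v}, r₁ = min{2r, 1 − 2r} and r̂₁ = min{2r₁, 1 − 2r₁}. -/
/-- Rational lower bound for `x ^ η` with `η ∈ [0,1]`. -/
lemma bern_lb (x η : ℝ) (hx : 0 < x) (h0 : 0 ≤ η) (h1 : η ≤ 1) :
    x / ((1 - η) * x + η) ≤ x ^ η := by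
  have hB : x ^ (1 - η) ≤ (1 - η) * x + η := by
    have := Real.geom_mean_le_arith_mean2_weighted
      (by linarith : (0:ℝ) ≤ 1 - η) h0 hx.le zero_le_one (by ring)
    simpa using this
  have hden : 0 < x ^ (1 - η) := Real.rpow_pos_of_pos hx _
  have h2 : x / ((1 - η) * x + η) ≤ x / x ^ (1 - η) :=
    div_le_div_of_nonneg_left hx.le hden hB
  have h3 : x ^ η = x / x ^ (1 - η) := by
    rw [eq_div_iff hden.ne', ← Real.rpow_add hx, show η + (1 - η) = 1 by ring, Real.rpow_one]
  rw [h3]; exact h2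

lemma sq_rpow' (X y : ℝ) (hX : 0 ≤ X) : (X ^ 2) ^ y = X ^ (2 * y) := by
  rw [← Real.rpow_natCast X 2, ← Real.rpow_mul hX]
  norm_num

set_option maxHeartbeats 1000000 in
lemma scalar_ineq (s w : ℝ) (hs : 0 < s) (hw0 : 0 < w) (hw1 : w < 1) :
    (1 + w) * s ^ 2 - w + (min w (1 - w)) * (s - 1) ^ 2 ≤
      Kant s ^ (-(min (2 * min w (1 - w)) (1 - 2 * min w (1 - w)))) * s ^ (2 + 2 * w) := by
  have hs1 : (0:ℝ) < s + 1 := by linarith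
  set g : ℝ := 4 * s / (s + 1) ^ 2 with hgdef
  have hg : 0 < g := by positivity
  have hKg : Kant s = g⁻¹ := by
    rw [Kant, hgdef, inv_div]
  have hExp : ∀ ρ : ℝ, Kant s ^ (-ρ) = g ^ ρ := by
    intro ρ
    rw [hKg, Real.inv_rpow hg.le, Real.rpow_neg hg.le, inv_inv]
  set u : ℝ := 2 * s / (s + 1) with hudef
  set q : ℝ := (s + 1) / 2 with hqdef
  have hu : 0 < u := by positivity
  have hq : 0 < q := by positivity
  have hgs : g * s = u ^ 2 := by
    rw [hgdef, hudef]; field_simp; ring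
  have hsg : s / g = q ^ 2 := by
    rw [hgdef, hqdef]; field_simp; ring
  have hssplit : s ^ (2 + 2 * w) = s ^ 2 * s ^ (2 * w) := by
    rw [Real.rpow_add hs, Real.rpow_two]
  rcases le_or_gt w (1/2) with hcase | hcase
  · -- r1 = w
    have hmin1 : min w (1 - w) = w := min_eq_left (by linarith)
    rw [hmin1]
    have hD : 0 < (2 - 4 * w) * s + 4 * w := by nlinarith
    have hkey : 2 * s ^ 3 / ((2 - 4 * w) * s + 4 * w) ≤
        Kant s ^ (-(min (2 * w) (1 - 2 * w))) * s ^ (2 + 2 * w) := by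
      rcases le_or_gt (4 * w) 1 with hc1 | hc1
      · -- ρ = 2w : E = s^2 * u^(4w)
        have hρ : min (2 * w) (1 - 2 * w) = 2 * w := min_eq_left (by linarith)
        rw [hρ, hExp, hssplit]
        have e1 : g ^ (2 * w) * s ^ (2 * w) = u ^ (4 * w) := by
          rw [← Real.mul_rpow hg.le hs.le, hgs, sq_rpow' u _ hu.le,
            show (2:ℝ) * (2 * w) = 4 * w by ring]
        have e2 : g ^ (2 * w) * (s ^ 2 * s ^ (2 * w)) = s ^ 2 * u ^ (4 * w) := by
          rw [← e1]; ring
        rw [e2]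
        have hb := bern_lb u (4 * w) hu (by linarith) hc1
        have hE : 0 < (1 - 4 * w) * u + 4 * w := by
          nlinarith [mul_nonneg (by linarith : (0:ℝ) ≤ 1 - 4 * w) hu.le]
        have e3 : s ^ 2 * (u / ((1 - 4 * w) * u + 4 * w)) =
            2 * s ^ 3 / ((2 - 4 * w) * s + 4 * w) := by
          rw [mul_div_assoc' (s ^ 2) u ((1 - 4 * w) * u + 4 * w),
            div_eq_div_iff hE.ne' hD.ne', hudef]
          have h2 : (s + 1) ≠ 0 := hs1.ne'
          field_simp
          ring
        calc 2 * s ^ 3 / ((2 - 4 * w) * s + 4 * w)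
            = s ^ 2 * (u / ((1 - 4 * w) * u + 4 * w)) := e3.symm
          _ ≤ s ^ 2 * u ^ (4 * w) := by
              apply mul_le_mul_of_nonneg_left hb (by positivity)
      · -- ρ = 1 - 2w : E = s^2 * g * q^(4w)
        have hρ : min (2 * w) (1 - 2 * w) = 1 - 2 * w := min_eq_right (by linarith)
        rw [hρ, hExp, hssplit]
        have e1 : g ^ (1 - 2 * w) * s ^ (2 * w) = g * q ^ (4 * w) := by
          rw [show (1:ℝ) - 2 * w = 1 + -(2 * w) by ring, Real.rpow_add hg,
            Real.rpow_one, Real.rpow_neg hg.le, mul_assoc, inv_mul_eq_div,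
            ← Real.div_rpow hs.le hg.le, hsg, sq_rpow' q _ hq.le,
            show (2:ℝ) * (2 * w) = 4 * w by ring]
        have e2 : g ^ (1 - 2 * w) * (s ^ 2 * s ^ (2 * w)) = s ^ 2 * g * q ^ (4 * w) := by
          rw [show g ^ (1 - 2 * w) * (s ^ 2 * s ^ (2 * w))
              = s ^ 2 * (g ^ (1 - 2 * w) * s ^ (2 * w)) by ring, e1]
          ring
        rw [e2]
        have hq4 : q ^ (4 * w) = q * q ^ (4 * w - 1) := by
          have t := Real.rpow_add hq 1 (4 * w - 1)
          rw [show (1:ℝ) + (4 * w - 1) = 4 * w by ring, Real.rpow_one] at t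
          exact t
        rw [hq4]
        have hb := bern_lb q (4 * w - 1) hq (by linarith) (by linarith)
        have hE : 0 < (1 - (4 * w - 1)) * q + (4 * w - 1) := by
          rw [hqdef]; nlinarith
        have e3 : s ^ 2 * g * (q * (q / ((1 - (4 * w - 1)) * q + (4 * w - 1)))) =
            2 * s ^ 3 / ((2 - 4 * w) * s + 4 * w) := by
          rw [mul_div_assoc' q q ((1 - (4 * w - 1)) * q + (4 * w - 1)),
            mul_div_assoc' (s ^ 2 * g) (q * q) ((1 - (4 * w - 1)) * q + (4 * w - 1)),
            div_eq_div_iff hE.ne' hD.ne', hgdef, hqdef]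
          have h2 : (s + 1) ≠ 0 := hs1.ne'
          field_simp
          ring
        calc 2 * s ^ 3 / ((2 - 4 * w) * s + 4 * w)
            = s ^ 2 * g * (q * (q / ((1 - (4 * w - 1)) * q + (4 * w - 1)))) := e3.symm
          _ ≤ s ^ 2 * g * (q * q ^ (4 * w - 1)) := by
              apply mul_le_mul_of_nonneg_left _ (by positivity)
              exact mul_le_mul_of_nonneg_left hb hq.le
    refine le_trans ?_ hkey
    rw [le_div_iff₀ hD]
    nlinarith [mul_nonneg (mul_nonneg (sq_nonneg w) hs.le) (sq_nonneg (s - 1))]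
  · -- r1 = 1 - w
    have hmin1 : min w (1 - w) = 1 - w := min_eq_right (by linarith)
    rw [hmin1]
    have hD : 0 < (4 - 4 * w) * s + (4 * w - 2) := by nlinarith
    have hkey : 2 * s ^ 4 / ((4 - 4 * w) * s + (4 * w - 2)) ≤
        Kant s ^ (-(min (2 * (1 - w)) (1 - 2 * (1 - w)))) * s ^ (2 + 2 * w) := by
      rcases le_or_gt (4 * w) 3 with hc1 | hc1
      · -- ρ = 2w - 1 : E = s^2 * g⁻¹ * u^(4w)
        have hρ : min (2 * (1 - w)) (1 - 2 * (1 - w)) = 2 * w - 1 := by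
          rw [min_eq_right (by linarith)]; ring
        rw [hρ, hExp, hssplit]
        have e1 : g ^ (2 * w - 1) * s ^ (2 * w) = g⁻¹ * u ^ (4 * w) := by
          rw [show 2 * w - 1 = -1 + 2 * w by ring, Real.rpow_add hg,
            Real.rpow_neg_one, mul_assoc, ← Real.mul_rpow hg.le hs.le, hgs,
            sq_rpow' u _ hu.le, show (2:ℝ) * (2 * w) = 4 * w by ring]
        have e2 : g ^ (2 * w - 1) * (s ^ 2 * s ^ (2 * w)) = s ^ 2 * g⁻¹ * u ^ (4 * w) := by
          rw [show g ^ (2 * w - 1) * (s ^ 2 * s ^ (2 * w))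
              = s ^ 2 * (g ^ (2 * w - 1) * s ^ (2 * w)) by ring, e1]
          ring
        rw [e2]
        have hu4 : u ^ (4 * w) = u ^ 2 * u ^ (4 * w - 2) := by
          have t := Real.rpow_add hu 2 (4 * w - 2)
          rw [show (2:ℝ) + (4 * w - 2) = 4 * w by ring, Real.rpow_two] at t
          exact t
        rw [hu4]
        have hb := bern_lb u (4 * w - 2) hu (by linarith) (by linarith)
        have hE : 0 < (1 - (4 * w - 2)) * u + (4 * w - 2) := by
          nlinarith [mul_nonneg (by linarith : (0:ℝ) ≤ 3 - 4 * w) hu.le]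
        have e3 : s ^ 2 * g⁻¹ * (u ^ 2 * (u / ((1 - (4 * w - 2)) * u + (4 * w - 2)))) =
            2 * s ^ 4 / ((4 - 4 * w) * s + (4 * w - 2)) := by
          rw [mul_div_assoc' (u ^ 2) u ((1 - (4 * w - 2)) * u + (4 * w - 2)),
            mul_div_assoc' (s ^ 2 * g⁻¹) (u ^ 2 * u) ((1 - (4 * w - 2)) * u + (4 * w - 2)),
            div_eq_div_iff hE.ne' hD.ne', hgdef, hudef]
          have h2 : (s + 1) ≠ 0 := hs1.ne'
          field_simp
          ring
        calc 2 * s ^ 4 / ((4 - 4 * w) * s + (4 * w - 2))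
            = s ^ 2 * g⁻¹ * (u ^ 2 * (u / ((1 - (4 * w - 2)) * u + (4 * w - 2)))) := e3.symm
          _ ≤ s ^ 2 * g⁻¹ * (u ^ 2 * u ^ (4 * w - 2)) := by
              apply mul_le_mul_of_nonneg_left _ (by positivity)
              exact mul_le_mul_of_nonneg_left hb (by positivity)
      · -- ρ = 2 - 2w : E = s^2 * g^2 * q^(4w)
        have hρ : min (2 * (1 - w)) (1 - 2 * (1 - w)) = 2 - 2 * w := by
          rw [min_eq_left (by linarith)]; ring
        rw [hρ, hExp, hssplit]
        have e1 : g ^ (2 - 2 * w) * s ^ (2 * w) = g ^ 2 * q ^ (4 * w) := by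
          rw [show (2:ℝ) - 2 * w = 2 + -(2 * w) by ring, Real.rpow_add hg,
            Real.rpow_two, Real.rpow_neg hg.le, mul_assoc, inv_mul_eq_div,
            ← Real.div_rpow hs.le hg.le, hsg, sq_rpow' q _ hq.le,
            show (2:ℝ) * (2 * w) = 4 * w by ring]
        have e2 : g ^ (2 - 2 * w) * (s ^ 2 * s ^ (2 * w)) = s ^ 2 * g ^ 2 * q ^ (4 * w) := by
          rw [show g ^ (2 - 2 * w) * (s ^ 2 * s ^ (2 * w))
              = s ^ 2 * (g ^ (2 - 2 * w) * s ^ (2 * w)) by ring, e1]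
          ring
        rw [e2]
        have hq4 : q ^ (4 * w) = q ^ 3 * q ^ (4 * w - 3) := by
          have t := Real.rpow_add hq 3 (4 * w - 3)
          rw [show (3:ℝ) + (4 * w - 3) = 4 * w by ring,
            show ((3:ℝ)) = ((3:ℕ):ℝ) by norm_num, Real.rpow_natCast] at t
          exact t
        rw [hq4]
        have hb := bern_lb q (4 * w - 3) hq (by linarith) (by linarith)
        have hE : 0 < (1 - (4 * w - 3)) * q + (4 * w - 3) := by
          rw [hqdef]; nlinarith
        have e3 : s ^ 2 * g ^ 2 * (q ^ 3 * (q / ((1 - (4 * w - 3)) * q + (4 * w - 3)))) =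
            2 * s ^ 4 / ((4 - 4 * w) * s + (4 * w - 2)) := by
          rw [mul_div_assoc' (q ^ 3) q ((1 - (4 * w - 3)) * q + (4 * w - 3)),
            mul_div_assoc' (s ^ 2 * g ^ 2) (q ^ 3 * q) ((1 - (4 * w - 3)) * q + (4 * w - 3)),
            div_eq_div_iff hE.ne' hD.ne', hgdef, hqdef]
          have h2 : (s + 1) ≠ 0 := hs1.ne'
          field_simp
          ring
        calc 2 * s ^ 4 / ((4 - 4 * w) * s + (4 * w - 2))
            = s ^ 2 * g ^ 2 * (q ^ 3 * (q / ((1 - (4 * w - 3)) * q + (4 * w - 3)))) := e3.symm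
          _ ≤ s ^ 2 * g ^ 2 * (q ^ 3 * q ^ (4 * w - 3)) := by
              apply mul_le_mul_of_nonneg_left _ (by positivity)
              exact mul_le_mul_of_nonneg_left hb (by positivity)
    refine le_trans ?_ hkey
    rw [le_div_iff₀ hD]
    nlinarith [mul_nonneg (sq_nonneg (s - 1)) (sq_nonneg (s + 2 * w - 1))]

theorem stmt_9 (a b v : ℝ) (ha : 0 < a) (hb : 0 < b) (hv0 : 1 / 2 < v) (hv : v < 1)
    (h r r1 rh1 : ℝ) (hh : h = b / a) (hr : r = min v (1 - v))
    (hr1 : r1 = min (2 * r) (1 - 2 * r)) (hrh1 : rh1 = min (2 * r1) (1 - 2 * r1)) :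
    ((1 - v) * a + v * b) ^ 2 ≤
      v ^ 2 * (a - b) ^ 2 - r1 * (Real.sqrt (a * b) - a) ^ 2
        + Kant (Real.sqrt h) ^ (-rh1) * (a ^ (1 - v) * b ^ v) ^ 2 := by
  subst hh hr hr1 hrh1
  have hba : 0 < b / a := div_pos hb ha
  set s : ℝ := Real.sqrt (b / a) with hsdef
  have hs : 0 < s := Real.sqrt_pos.mpr hba
  have hs2 : s ^ 2 = b / a := Real.sq_sqrt hba.le
  have hb' : b = a * s ^ 2 := by rw [hs2]; field_simp
  -- rewrite the min expressions
  have hrv : min v (1 - v) = 1 - v := min_eq_right (by linarith)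
  have hr1v : min (2 * min v (1 - v)) (1 - 2 * min v (1 - v)) =
      min (2 * v - 1) (1 - (2 * v - 1)) := by
    rw [hrv, show (1:ℝ) - 2 * (1 - v) = 2 * v - 1 by ring,
      show (2:ℝ) * (1 - v) = 1 - (2 * v - 1) by ring, min_comm]
  rw [hr1v]
  -- geometric mean squared
  have hG : (a ^ (1 - v) * b ^ v) ^ 2 = a ^ 2 * s ^ (2 + 2 * (2 * v - 1)) := by
    have h1 : b ^ v = a ^ v * s ^ (2 * v) := by
      rw [hb', Real.mul_rpow ha.le (sq_nonneg s), sq_rpow' s v hs.le]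
    have h2 : a ^ (1 - v) * a ^ v = a := by
      rw [← Real.rpow_add ha]
      norm_num
    calc (a ^ (1 - v) * b ^ v) ^ 2 = (a ^ (1 - v) * a ^ v) ^ 2 * (s ^ (2 * v)) ^ 2 := by
          rw [h1]; ring
      _ = a ^ 2 * s ^ (2 + 2 * (2 * v - 1)) := by
          rw [h2, sq (s ^ (2 * v)), ← Real.rpow_add hs,
            show 2 * v + 2 * v = 2 + 2 * (2 * v - 1) by ring]
  -- sqrt (a*b)
  have hsab : Real.sqrt (a * b) = a * s := by
    rw [show a * b = (a * s) ^ 2 by rw [hb']; ring, Real.sqrt_sq (by positivity)]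
  rw [hG, hsab, hb']
  have main := scalar_ineq s (2 * v - 1) hs (by linarith) (by linarith)
  rw [show (1:ℝ) - (2 * v - 1) = 1 - (2 * v - 1) from rfl] at main
  have main' := mul_le_mul_of_nonneg_left main (sq_nonneg a)
  nlinarith [main']
end

section
/- Let A, B be n×n positive definite complex matrices and let m, m', M, M' be positive reals satisfying either m'·I ≤ A ≤ m·I < M·I ≤ B ≤ M'·I or m'·I ≤ B ≤ m·I < M·I ≤ A ≤ M'·I in the Loewner order. If 1/2 < v < 1, then A∇_v B ≥ 2(1 − v)(A∇B − A#B) + r₁(A#B − 2(A#_{3/4}B) + B) + K(h^{1/4}, 2)^{r̂₁} · (A#_v B) in the Loewner order, where h = M/m, r = min{v, 1 − v}, r₁ = min{2r, 1 − 2r} and r̂₁ = min{2r₁, 1 − 2r₁}. -/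
open Matrix
open scoped ComplexOrder ComplexInnerProductSpace

/-- Real power of a matrix, defined for Hermitian matrices via the spectral
decomposition (functional calculus); junk value otherwise. -/
noncomputable def mrpow {n : ℕ} (A : Matrix (Fin n) (Fin n) ℂ) (t : ℝ) :
    Matrix (Fin n) (Fin n) ℂ :=
  if h : A.IsHermitian then
    (h.eigenvectorUnitary : Matrix (Fin n) (Fin n) ℂ)
      * Matrix.diagonal (fun i => ((h.eigenvalues i ^ t : ℝ) : ℂ))
      * star (h.eigenvectorUnitary : Matrix (Fin n) (Fin n) ℂ)
  else A

/-- Weighted arithmetic mean `A ∇_v B = (1 - v) A + v B`. -/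
noncomputable def anabla {n : ℕ} (v : ℝ) (A B : Matrix (Fin n) (Fin n) ℂ) :
    Matrix (Fin n) (Fin n) ℂ :=
  ((1 - v : ℝ) : ℂ) • A + ((v : ℝ) : ℂ) • B

/-- Weighted geometric mean `A #_v B = A^{1/2} (A^{-1/2} B A^{-1/2})^v A^{1/2}`. -/
noncomputable def asharp {n : ℕ} (v : ℝ) (A B : Matrix (Fin n) (Fin n) ℂ) :
    Matrix (Fin n) (Fin n) ℂ :=
  mrpow A (1 / 2) * mrpow (mrpow A (-(1 / 2)) * B * mrpow A (-(1 / 2))) v * mrpow A (1 / 2)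

/-- Heinz operator mean `H_v(A, B) = (A #_v B + A #_{1-v} B) / 2`. -/
noncomputable def heinz {n : ℕ} (v : ℝ) (A B : Matrix (Fin n) (Fin n) ℂ) :
    Matrix (Fin n) (Fin n) ℂ :=
  ((1 / 2 : ℝ) : ℂ) • (asharp v A B + asharp (1 - v) A B)

/-- The Loewner order: `loewner X Y` iff `Y - X` is positive semidefinite. -/
def loewner {n : ℕ} (X Y : Matrix (Fin n) (Fin n) ℂ) : Prop := (Y - X).PosSemidef

namespace StmtAux

/-! ### Scalar lemmas -/

lemma kant_eq (a b : ℝ) (ha : 0 < a) (hb : 0 < b) :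
    Kant (b / a) = ((a + b) / 2) ^ 2 / (a * b) := by
  unfold Kant; field_simp; ring

lemma one_le_kant {s : ℝ} (hs : 0 < s) : 1 ≤ Kant s := by
  unfold Kant; rw [le_div_iff₀ (by positivity)]; nlinarith [sq_nonneg (s - 1)]

lemma kant_mono {s t : ℝ} (hs : 1 ≤ s) (hst : s ≤ t) : Kant s ≤ Kant t := by
  have h1 : (0:ℝ) < 4 * s := by linarith
  have h2 : (0:ℝ) < 4 * t := by linarith
  have h3 : 1 ≤ s * t := by nlinarith
  unfold Kant
  rw [div_le_div_iff₀ h1 h2]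
  nlinarith [mul_nonneg (sub_nonneg.2 hst) (sub_nonneg.2 h3)]

lemma kant_inv {s : ℝ} (hs : 0 < s) : Kant s⁻¹ = Kant s := by
  unfold Kant; rw [div_eq_div_iff (by positivity) (by positivity)]
  field_simp; ring

lemma base_young {a b u : ℝ} (ha : 0 < a) (hb : 0 < b) (hu : 0 ≤ u) (hu1 : u ≤ 1) :
    Kant (b / a) ^ min u (1 - u) * (a ^ (1 - u) * b ^ u) ≤ (1 - u) * a + u * b := by
  have hab : 0 < a + b := by linarith
  rcases le_or_gt u (1/2) with hc | hc
  · rw [min_eq_left (by linarith)]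
    have e1 : Kant (b / a) ^ u * (a ^ (1 - u) * b ^ u)
        = a ^ (1 - 2*u) * ((a + b) / 2) ^ (2*u) := by
      rw [kant_eq a b ha hb, Real.div_rpow (by positivity) (by positivity),
        Real.mul_rpow ha.le hb.le, ← Real.rpow_natCast ((a+b)/2) 2,
        ← Real.rpow_mul (by positivity)]
      rw [div_mul_eq_mul_div, div_eq_iff (by positivity)]
      have haa : a ^ (1-u) = a ^ (1-2*u) * a ^ u := by
        rw [← Real.rpow_add ha]; congr 1; ring
      push_cast
      rw [haa]; ring
    rw [e1]
    have := Real.geom_mean_le_arith_mean2_weighted (by linarith : (0:ℝ) ≤ 1 - 2*u)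
      (by linarith : (0:ℝ) ≤ 2*u) ha.le (by positivity : (0:ℝ) ≤ (a+b)/2) (by ring)
    calc a ^ (1 - 2*u) * ((a + b) / 2) ^ (2*u) ≤ (1-2*u) * a + 2*u * ((a+b)/2) := this
      _ = (1 - u) * a + u * b := by ring
  · rw [min_eq_right (by linarith)]
    have e1 : Kant (b / a) ^ (1 - u) * (a ^ (1 - u) * b ^ u)
        = b ^ (2*u - 1) * ((a + b) / 2) ^ (2 - 2*u) := by
      rw [kant_eq a b ha hb, Real.div_rpow (by positivity) (by positivity),
        Real.mul_rpow ha.le hb.le, ← Real.rpow_natCast ((a+b)/2) 2,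
        ← Real.rpow_mul (by positivity)]
      rw [div_mul_eq_mul_div, div_eq_iff (by positivity)]
      have hbb : b ^ u = b ^ (2*u-1) * b ^ (1-u) := by
        rw [← Real.rpow_add hb]; congr 1; ring
      have hxx : ((a+b)/2) ^ ((2:ℝ)*(1-u)) = ((a+b)/2) ^ ((2:ℝ)-2*u) := by
        congr 1; ring
      push_cast
      rw [hxx, hbb]; ring
    rw [e1]
    have := Real.geom_mean_le_arith_mean2_weighted (by linarith : (0:ℝ) ≤ 2*u - 1)
      (by linarith : (0:ℝ) ≤ 2 - 2*u) hb.le (by positivity : (0:ℝ) ≤ (a+b)/2) (by ring)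
    calc b ^ (2*u-1) * ((a + b) / 2) ^ (2-2*u) ≤ (2*u-1) * b + (2-2*u) * ((a+b)/2) := this
      _ = (1 - u) * a + u * b := by ring

lemma scalar_key (v h r r1 rh1 t : ℝ) (ht : 0 < t) (hh1 : 1 < h)
    (hrange : h ≤ t ∨ t ≤ 1 / h)
    (hr : r = min v (1 - v)) (hr1 : r1 = min (2*r) (1-2*r))
    (hrh1 : rh1 = min (2*r1) (1-2*r1))
    (hv0 : 1/2 < v) (hv1 : v < 1) :
    2*(1-v) * ((1+t)/2 - t ^ ((1:ℝ)/2)) + r1 * (t ^ ((1:ℝ)/2) - 2 * t ^ ((3:ℝ)/4) + t)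
      + Kant (h ^ ((1:ℝ)/4)) ^ rh1 * t ^ v ≤ (1-v) + v * t := by
  have hh0 : (0:ℝ) < h := by linarith
  have hrv : r = 1 - v := by rw [hr]; exact min_eq_right (by linarith)
  have hr1' : r1 = min (2 - 2*v) (2*v - 1) := by rw [hr1, hrv]; ring_nf
  have hr1nn : 0 ≤ r1 := by rw [hr1']; apply le_min <;> linarith
  have hr1half : r1 ≤ 1/2 := by
    rcases le_total (2 - 2*v) (2*v-1) with hle | hle
    · rw [hr1', min_eq_left hle]; linarith
    · rw [hr1', min_eq_right hle]; linarith
  have hrh1nn : 0 ≤ rh1 := by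
    rw [hrh1]; rcases le_total (2*r1) (1-2*r1) with hle | hle
    · rw [min_eq_left hle]; linarith
    · rw [min_eq_right hle]; linarith
  have hq : 0 < t ^ ((1:ℝ)/4) := Real.rpow_pos_of_pos ht _
  have hKle : Kant (h ^ ((1:ℝ)/4)) ^ rh1 ≤ Kant (t ^ ((1:ℝ)/4)) ^ rh1 := by
    have h14 : (1:ℝ) ≤ h ^ ((1:ℝ)/4) := Real.one_le_rpow hh1.le (by norm_num)
    have hKK : Kant (h ^ ((1:ℝ)/4)) ≤ Kant (t ^ ((1:ℝ)/4)) := by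
      rcases hrange with hc | hc
      · exact kant_mono h14 (Real.rpow_le_rpow hh0.le hc (by norm_num))
      · have h1 : h ≤ t⁻¹ := by
          rw [one_div] at hc
          rw [← inv_inv h]
          exact inv_anti₀ ht hc
        have : h ^ ((1:ℝ)/4) ≤ (t ^ ((1:ℝ)/4))⁻¹ := by
          rw [← Real.inv_rpow ht.le]
          exact Real.rpow_le_rpow hh0.le h1 (by norm_num)
        calc Kant (h ^ ((1:ℝ)/4)) ≤ Kant ((t ^ ((1:ℝ)/4))⁻¹) := kant_mono h14 this
          _ = Kant (t ^ ((1:ℝ)/4)) := kant_inv hq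
    exact Real.rpow_le_rpow (le_trans zero_le_one (one_le_kant (by positivity))) hKK hrh1nn
  have htv : 0 ≤ t ^ v := (Real.rpow_pos_of_pos ht v).le
  have hstep : Kant (h ^ ((1:ℝ)/4)) ^ rh1 * t ^ v ≤ Kant (t ^ ((1:ℝ)/4)) ^ rh1 * t ^ v :=
    mul_le_mul_of_nonneg_right hKle htv
  have ht12 : (0:ℝ) < t ^ ((1:ℝ)/2) := Real.rpow_pos_of_pos ht _
  have ht34 : (0:ℝ) < t ^ ((3:ℝ)/4) := Real.rpow_pos_of_pos ht _
  rcases le_or_gt v (3/4) with hcase | hcase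
  · have hr1v : r1 = 2*v - 1 := by rw [hr1']; exact min_eq_right (by linarith)
    set u : ℝ := 2*(2*v-1) with hu
    have hby := base_young (a := t ^ ((1:ℝ)/2)) (b := t ^ ((3:ℝ)/4)) (u := u)
      ht12 ht34 (by rw [hu]; linarith) (by rw [hu]; linarith)
    have hba : t ^ ((3:ℝ)/4) / t ^ ((1:ℝ)/2) = t ^ ((1:ℝ)/4) := by
      rw [← Real.rpow_sub ht]; norm_num
    have hmin : min u (1 - u) = rh1 := by
      rw [hrh1, hr1v, hu]
    have hpow : (t ^ ((1:ℝ)/2)) ^ (1 - u) * (t ^ ((3:ℝ)/4)) ^ u = t ^ v := by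
      rw [← Real.rpow_mul ht.le, ← Real.rpow_mul ht.le, ← Real.rpow_add ht]
      congr 1; rw [hu]; ring
    rw [hba, hmin, hpow] at hby
    nlinarith [hby, hstep]
  · have hr1v : r1 = 2 - 2*v := by rw [hr1']; exact min_eq_left (by linarith)
    set u : ℝ := 4*v - 3 with hu
    have hby := base_young (a := t ^ ((3:ℝ)/4)) (b := t) (u := u)
      ht34 ht (by rw [hu]; linarith) (by rw [hu]; linarith)
    have hba : t / t ^ ((3:ℝ)/4) = t ^ ((1:ℝ)/4) := by
      nth_rewrite 1 [show t = t ^ (1:ℝ) from (Real.rpow_one t).symm]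
      rw [← Real.rpow_sub ht]; norm_num
    have hmin : min u (1 - u) = rh1 := by
      rw [hrh1, hr1v, hu, min_comm]; congr 1 <;> ring
    have hpow : (t ^ ((3:ℝ)/4)) ^ (1 - u) * t ^ u = t ^ v := by
      nth_rewrite 2 [show t = t ^ (1:ℝ) from (Real.rpow_one t).symm]
      rw [← Real.rpow_mul ht.le, ← Real.rpow_mul ht.le, ← Real.rpow_add ht]
      congr 1; rw [hu]; ring
    rw [hba, hmin, hpow] at hby
    nlinarith [hby, hstep]

/-! ### Matrix functional-calculus lemmas -/

variable {n : ℕ} {T : Matrix (Fin n) (Fin n) ℂ}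

/-- Conjugation of a real diagonal matrix by the eigenvector unitary of `T`. -/
noncomputable def cdiag (hT : T.IsHermitian) (f : Fin n → ℝ) :
    Matrix (Fin n) (Fin n) ℂ :=
  (hT.eigenvectorUnitary : Matrix (Fin n) (Fin n) ℂ)
    * Matrix.diagonal (fun i => ((f i : ℝ) : ℂ))
    * star (hT.eigenvectorUnitary : Matrix (Fin n) (Fin n) ℂ)

lemma cdiag_add (hT : T.IsHermitian) (f g : Fin n → ℝ) :
    cdiag hT f + cdiag hT g = cdiag hT (fun i => f i + g i) := by
  unfold cdiag
  rw [← add_mul, ← mul_add, diagonal_add]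
  have : (fun i => (((f i : ℝ) : ℂ) + ((g i : ℝ) : ℂ)))
      = fun i => (((f i + g i : ℝ)) : ℂ) := by
    funext i; push_cast; ring
  rw [this]

lemma cdiag_sub (hT : T.IsHermitian) (f g : Fin n → ℝ) :
    cdiag hT f - cdiag hT g = cdiag hT (fun i => f i - g i) := by
  unfold cdiag
  rw [← sub_mul, ← mul_sub, diagonal_sub]
  have : (fun i => (((f i : ℝ) : ℂ) - ((g i : ℝ) : ℂ)))
      = fun i => (((f i - g i : ℝ)) : ℂ) := by
    funext i; push_cast; ring
  rw [this]

lemma cdiag_smul (hT : T.IsHermitian) (c : ℝ) (f : Fin n → ℝ) :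
    ((c : ℝ) : ℂ) • cdiag hT f = cdiag hT (fun i => c * f i) := by
  unfold cdiag
  rw [← smul_mul_assoc, ← mul_smul_comm, ← diagonal_smul]
  have : ((c:ℂ) • fun i => ((f i : ℝ) : ℂ)) = fun i => (((c * f i : ℝ)) : ℂ) := by
    funext i; simp [smul_eq_mul]
  rw [this]

lemma cdiag_mul (hT : T.IsHermitian) (f g : Fin n → ℝ) :
    cdiag hT f * cdiag hT g = cdiag hT (fun i => f i * g i) := by
  unfold cdiag
  have h1 : star (hT.eigenvectorUnitary : Matrix (Fin n) (Fin n) ℂ)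
      * (hT.eigenvectorUnitary : Matrix (Fin n) (Fin n) ℂ) = 1 :=
    Unitary.coe_star_mul_self _
  set U := (hT.eigenvectorUnitary : Matrix (Fin n) (Fin n) ℂ) with hU
  calc U * Matrix.diagonal (fun i => ((f i : ℝ) : ℂ)) * star U
        * (U * Matrix.diagonal (fun i => ((g i : ℝ) : ℂ)) * star U)
      = U * (Matrix.diagonal (fun i => ((f i : ℝ) : ℂ))
          * ((star U * U) * Matrix.diagonal (fun i => ((g i : ℝ) : ℂ)))) * star U := by
        simp only [Matrix.mul_assoc]
    _ = U * Matrix.diagonal (fun i => ((f i * g i : ℝ) : ℂ)) * star U := by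
        rw [h1, one_mul, diagonal_mul_diagonal]
        have : (fun i => ((f i : ℝ) : ℂ) * ((g i : ℝ) : ℂ))
            = fun i => (((f i * g i : ℝ)) : ℂ) := by
          funext i; push_cast; ring
        rw [this]

lemma cdiag_one (hT : T.IsHermitian) : cdiag hT (fun _ => (1:ℝ)) = 1 := by
  unfold cdiag
  have : Matrix.diagonal (fun _ : Fin n => ((1 : ℝ) : ℂ)) = 1 := by
    have : (fun _ : Fin n => ((1 : ℝ) : ℂ)) = fun _ => (1:ℂ) := by funext i; simp
    rw [this, diagonal_one]
  rw [this, mul_one]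
  exact Unitary.coe_mul_star_self _

lemma cdiag_isHermitian (hT : T.IsHermitian) (f : Fin n → ℝ) :
    (cdiag hT f).IsHermitian := by
  have hd : (Matrix.diagonal (fun i => ((f i : ℝ) : ℂ))).IsHermitian := by
    apply isHermitian_diagonal_of_self_adjoint
    funext i
    simp [Pi.star_apply, Complex.star_def, Complex.conj_ofReal]
  have h := isHermitian_mul_mul_conjTranspose
    (hT.eigenvectorUnitary : Matrix (Fin n) (Fin n) ℂ) hd
  rwa [← Matrix.star_eq_conjTranspose] at h

lemma cdiag_posSemidef (hT : T.IsHermitian) {f : Fin n → ℝ} (hf : ∀ i, 0 ≤ f i) :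
    (cdiag hT f).PosSemidef := by
  have hd : Matrix.PosSemidef (Matrix.diagonal (fun i => ((f i : ℝ) : ℂ))) :=
    PosSemidef.diagonal (fun i => Complex.zero_le_real.2 (hf i))
  have := hd.mul_mul_conjTranspose_same (hT.eigenvectorUnitary : Matrix (Fin n) (Fin n) ℂ)
  rwa [← Matrix.star_eq_conjTranspose] at this

lemma cdiag_eigenvalues (hT : T.IsHermitian) : cdiag hT hT.eigenvalues = T := by
  unfold cdiag
  conv_rhs => rw [hT.spectral_theorem]
  rfl

lemma mrpow_eq (hT : T.IsHermitian) (s : ℝ) :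
    mrpow T s = cdiag hT (fun i => hT.eigenvalues i ^ s) := by
  unfold mrpow cdiag
  rw [dif_pos hT]

lemma mrpow_isHermitian (hT : T.IsHermitian) (s : ℝ) : (mrpow T s).IsHermitian := by
  rw [mrpow_eq hT s]; exact cdiag_isHermitian hT _

lemma mrpow_mul (hT : T.PosDef) (s t : ℝ) :
    mrpow T s * mrpow T t = mrpow T (s + t) := by
  rw [mrpow_eq hT.isHermitian, mrpow_eq hT.isHermitian, mrpow_eq hT.isHermitian, cdiag_mul]
  have : (fun i => hT.isHermitian.eigenvalues i ^ s * hT.isHermitian.eigenvalues i ^ t)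
      = fun i => hT.isHermitian.eigenvalues i ^ (s + t) := by
    funext i
    rw [← Real.rpow_add (hT.eigenvalues_pos i)]
  rw [this]

lemma mrpow_one (hT : T.PosDef) : mrpow T 1 = T := by
  rw [mrpow_eq hT.isHermitian]
  have : (fun i => hT.isHermitian.eigenvalues i ^ (1:ℝ)) = hT.isHermitian.eigenvalues := by
    funext i; rw [Real.rpow_one]
  rw [this, cdiag_eigenvalues]

lemma mrpow_zero (hT : T.PosDef) : mrpow T 0 = 1 := by
  rw [mrpow_eq hT.isHermitian]
  have : (fun i => hT.isHermitian.eigenvalues i ^ (0:ℝ)) = fun _ => (1:ℝ) := by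
    funext i; rw [Real.rpow_zero]
  rw [this, cdiag_one]

lemma psd_smul {X : Matrix (Fin n) (Fin n) ℂ} (hX : X.PosSemidef) {c : ℝ} (hc : 0 ≤ c) :
    ((c : ℂ) • X).PosSemidef := by
  refine posSemidef_iff_dotProduct_mulVec.mpr ⟨?_, ?_⟩
  · unfold Matrix.IsHermitian
    rw [conjTranspose_smul, hX.1.eq]
    congr 1
    simp [Complex.star_def, Complex.conj_ofReal]
  · intro x
    rw [smul_mulVec, dotProduct_smul, smul_eq_mul]
    exact mul_nonneg (Complex.zero_le_real.2 hc) (hX.dotProduct_mulVec_nonneg x)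

lemma posdef_conj {B C : Matrix (Fin n) (Fin n) ℂ} (hB : B.PosDef) (hC : C.IsHermitian)
    (hCu : IsUnit C) : (C * B * C).PosDef := by
  refine posDef_iff_dotProduct_mulVec.mpr ⟨?_, ?_⟩
  · have h := isHermitian_mul_mul_conjTranspose C hB.isHermitian
    rwa [hC.eq] at h
  · intro x hx
    have hy : C *ᵥ x ≠ 0 := by
      intro hcon
      apply hx
      apply Matrix.mulVec_injective_iff_isUnit.mpr hCu
      rw [hcon, mulVec_zero]
    have e1 : (C * B * C) *ᵥ x = C *ᵥ (B *ᵥ (C *ᵥ x)) := by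
      rw [← mulVec_mulVec, ← mulVec_mulVec]
    rw [e1, dotProduct_mulVec]
    have e2 : star x ᵥ* C = star (C *ᵥ x) := by
      rw [star_mulVec, hC.eq]
    rw [e2]
    exact hB.dotProduct_mulVec_pos hy

lemma basis_dot (hT : T.IsHermitian) (i : Fin n) :
    star (⇑(hT.eigenvectorBasis i)) ⬝ᵥ (⇑(hT.eigenvectorBasis i)) = (1 : ℂ) := by
  have h := hT.eigenvectorBasis.orthonormal.1 i
  have h2 : (⟪hT.eigenvectorBasis i, hT.eigenvectorBasis i⟫ : ℂ) = 1 := by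
    rw [inner_self_eq_norm_sq_to_K, h]; norm_num
  rw [EuclideanSpace.inner_eq_star_dotProduct, dotProduct_comm] at h2
  exact h2

lemma eig_ge (hT : T.IsHermitian) {c : ℝ} (hpsd : (T - (c : ℂ) • 1).PosSemidef) (i : Fin n) :
    c ≤ hT.eigenvalues i := by
  have h2 := hpsd.dotProduct_mulVec_nonneg (⇑(hT.eigenvectorBasis i))
  rw [sub_mulVec, smul_mulVec, one_mulVec, hT.mulVec_eigenvectorBasis i,
    dotProduct_sub, dotProduct_smul, dotProduct_smul, basis_dot hT i] at h2
  rw [smul_eq_mul, mul_one] at h2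
  have : (0:ℂ) ≤ ((hT.eigenvalues i - c : ℝ) : ℂ) := by
    push_cast
    rwa [Complex.real_smul, mul_one] at h2
  have := Complex.zero_le_real.1 this
  linarith

lemma eig_le (hT : T.IsHermitian) {c : ℝ} (hpsd : ((c : ℂ) • 1 - T).PosSemidef) (i : Fin n) :
    hT.eigenvalues i ≤ c := by
  have h2 := hpsd.dotProduct_mulVec_nonneg (⇑(hT.eigenvectorBasis i))
  rw [sub_mulVec, smul_mulVec, one_mulVec, hT.mulVec_eigenvectorBasis i,
    dotProduct_sub, dotProduct_smul, dotProduct_smul, basis_dot hT i] at h2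
  rw [smul_eq_mul, mul_one] at h2
  have : (0:ℂ) ≤ ((c - hT.eigenvalues i : ℝ) : ℂ) := by
    push_cast
    rwa [Complex.real_smul, mul_one] at h2
  have := Complex.zero_le_real.1 this
  linarith

/-! ### Conjugated-diagonal combination lemmas -/

lemma conjc_add (hT : T.IsHermitian) (C : Matrix (Fin n) (Fin n) ℂ) (f g : Fin n → ℝ) :
    C * cdiag hT f * C + C * cdiag hT g * C = C * cdiag hT (fun i => f i + g i) * C := by
  rw [← add_mul, ← mul_add, cdiag_add]

lemma conjc_sub (hT : T.IsHermitian) (C : Matrix (Fin n) (Fin n) ℂ) (f g : Fin n → ℝ) :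
    C * cdiag hT f * C - C * cdiag hT g * C = C * cdiag hT (fun i => f i - g i) * C := by
  rw [← sub_mul, ← mul_sub, cdiag_sub]

lemma conjc_smul (hT : T.IsHermitian) (C : Matrix (Fin n) (Fin n) ℂ) (c : ℝ) (f : Fin n → ℝ) :
    ((c : ℝ) : ℂ) • (C * cdiag hT f * C) = C * cdiag hT (fun i => c * f i) * C := by
  rw [← smul_mul_assoc, ← mul_smul_comm, cdiag_smul]

lemma conjc_two (hT : T.IsHermitian) (C : Matrix (Fin n) (Fin n) ℂ) (f : Fin n → ℝ) :
    (2 : ℂ) • (C * cdiag hT f * C) = C * cdiag hT (fun i => 2 * f i) * C := by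
  rw [show (2:ℂ) = ((2:ℝ):ℂ) by norm_num]
  exact conjc_smul hT C 2 f

end StmtAux

open StmtAux

set_option maxHeartbeats 2000000 in
theorem stmt_11 {n : ℕ} (A B : Matrix (Fin n) (Fin n) ℂ) (m m' M M' v h r r1 rh1 : ℝ)
    (hA : A.PosDef) (hB : B.PosDef)
    (hm' : 0 < m') (hm : 0 < m) (hM : 0 < M) (hM' : 0 < M') (hmM : m < M)
    (hcond : (loewner ((m' : ℂ) • 1) A ∧ loewner A ((m : ℂ) • 1) ∧
        loewner ((M : ℂ) • 1) B ∧ loewner B ((M' : ℂ) • 1)) ∨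
      (loewner ((m' : ℂ) • 1) B ∧ loewner B ((m : ℂ) • 1) ∧
        loewner ((M : ℂ) • 1) A ∧ loewner A ((M' : ℂ) • 1)))
    (hh : h = M / m) (hr : r = min v (1 - v))
    (hr1 : r1 = min (2 * r) (1 - 2 * r)) (hrh1 : rh1 = min (2 * r1) (1 - 2 * r1))
    (hv0 : 1 / 2 < v) (hv : v < 1) :
    loewner
      (((2 * (1 - v) : ℝ) : ℂ) • (anabla (1 / 2) A B - asharp (1 / 2) A B)
        + ((r1 : ℝ) : ℂ) • (asharp (1 / 2) A B - (2 : ℂ) • asharp (3 / 4) A B + B)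
        + ((Kant (h ^ ((1 : ℝ) / 4)) ^ rh1 : ℝ) : ℂ) • asharp v A B)
      (anabla v A B) := by
  have hAH : A.IsHermitian := hA.isHermitian
  set P : Matrix (Fin n) (Fin n) ℂ := mrpow A (1 / 2) with hP
  set Am : Matrix (Fin n) (Fin n) ℂ := mrpow A (-(1 / 2)) with hAm
  have hPP : P * P = A := by
    rw [hP, mrpow_mul hA, show ((1:ℝ)/2 + 1/2 : ℝ) = 1 by norm_num, mrpow_one hA]
  have hPAm : P * Am = 1 := by
    rw [hP, hAm, mrpow_mul hA, show ((1:ℝ)/2 + -(1/2) : ℝ) = 0 by norm_num, mrpow_zero hA]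
  have hAmP : Am * P = 1 := by
    rw [hP, hAm, mrpow_mul hA, show (-(1/2) + (1:ℝ)/2 : ℝ) = 0 by norm_num, mrpow_zero hA]
  have hPH : P.IsHermitian := by rw [hP]; exact mrpow_isHermitian hAH _
  have hAmH : Am.IsHermitian := by rw [hAm]; exact mrpow_isHermitian hAH _
  set T : Matrix (Fin n) (Fin n) ℂ := Am * B * Am with hTdef
  have hTH : T.IsHermitian := by
    rw [hTdef]
    have hh2 := isHermitian_mul_mul_conjTranspose Am hB.isHermitian
    rwa [hAmH.eq] at hh2
  have hTpd : T.PosDef := by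
    rw [hTdef]; exact posdef_conj hB hAmH ⟨⟨Am, P, hAmP, hPAm⟩, rfl⟩
  have hsharp : ∀ s : ℝ,
      asharp s A B = P * cdiag hTH (fun i => hTH.eigenvalues i ^ s) * P := by
    intro s
    rw [← mrpow_eq hTH s, hTdef, hP, hAm]
    rfl
  have hAe : A = P * cdiag hTH (fun _ => (1:ℝ)) * P := by
    rw [cdiag_one hTH, mul_one, hPP]
  have hconjP : ∀ X : Matrix (Fin n) (Fin n) ℂ, P * (Am * X * Am) * P = X := by
    intro X
    calc P * (Am * X * Am) * P = P * (Am * (X * (Am * P))) := by simp only [Matrix.mul_assoc]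
      _ = X := by rw [hAmP, mul_one, ← Matrix.mul_assoc, hPAm, one_mul]
  have hBe : B = P * cdiag hTH hTH.eigenvalues * P := by
    rw [cdiag_eigenvalues hTH, hTdef, hconjP]
  have hAmA : Am * A * Am = 1 := by
    rw [← hPP]
    calc Am * (P * P) * Am = (Am * P) * (P * Am) := by simp only [Matrix.mul_assoc]
      _ = 1 := by rw [hAmP, hPAm, one_mul]
  have hh1 : 1 < h := by rw [hh]; exact (one_lt_div hm).2 hmM
  have hh0 : 0 < h := lt_trans one_pos hh1
  -- eigenvalue range
  have hrange : ∀ i, h ≤ hTH.eigenvalues i ∨ hTH.eigenvalues i ≤ 1 / h := by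
    rcases hcond with ⟨hc1, hc2, hc3, hc4⟩ | ⟨hc1, hc2, hc3, hc4⟩
    · intro i; left
      unfold loewner at hc2 hc3
      have hBA : (B - (h:ℂ) • A).PosSemidef := by
        have heq : B - (h:ℂ) • A = (B - (M:ℂ) • 1) + (h:ℂ) • ((m:ℂ) • 1 - A) := by
          rw [smul_sub, smul_smul, ← Complex.ofReal_mul,
            show h * m = M by rw [hh]; field_simp]
          abel
        rw [heq]
        exact hc3.add (psd_smul hc2 hh0.le)
      have hconj : T - (h:ℂ) • 1 = Am * (B - (h:ℂ) • A) * Am := by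
        rw [hTdef, mul_sub, sub_mul, mul_smul_comm, smul_mul_assoc, hAmA]
      apply eig_ge hTH
      rw [hconj]
      have hps := hBA.conjTranspose_mul_mul_same Am
      rwa [hAmH.eq] at hps
    · intro i; right
      unfold loewner at hc2 hc3
      have hAB : (((1/h : ℝ):ℂ) • A - B).PosSemidef := by
        have heq : ((1/h : ℝ):ℂ) • A - B
            = ((1/h : ℝ):ℂ) • (A - (M:ℂ) • 1) + ((m:ℂ) • 1 - B) := by
          rw [smul_sub, smul_smul, ← Complex.ofReal_mul,
            show (1/h) * M = m by rw [hh]; field_simp]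
          abel
        rw [heq]
        exact (psd_smul hc3 (by positivity)).add hc2
      have hconj : ((1/h : ℝ):ℂ) • (1 : Matrix (Fin n) (Fin n) ℂ) - T
          = Am * (((1/h : ℝ):ℂ) • A - B) * Am := by
        rw [hTdef, mul_sub, sub_mul, mul_smul_comm, smul_mul_assoc, hAmA]
      have hps := hAB.conjTranspose_mul_mul_same Am
      rw [hAmH.eq] at hps
      rw [← hconj] at hps
      have := eig_le hTH (c := 1/h) (by exact_mod_cast hps) i
      simpa using this
  -- the scalar function
  set c2 : ℝ := Kant (h ^ ((1 : ℝ) / 4)) ^ rh1 with hc2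
  set gfun : Fin n → ℝ := fun i =>
    ((1 - v) + v * hTH.eigenvalues i)
      - (2*(1-v) * ((1 + hTH.eigenvalues i)/2 - hTH.eigenvalues i ^ ((1:ℝ)/2))
        + r1 * (hTH.eigenvalues i ^ ((1:ℝ)/2) - 2 * hTH.eigenvalues i ^ ((3:ℝ)/4)
          + hTH.eigenvalues i)
        + c2 * hTH.eigenvalues i ^ v) with hgfun
  have hg : ∀ i, 0 ≤ gfun i := by
    intro i
    rw [hgfun]
    have := scalar_key v h r r1 rh1 (hTH.eigenvalues i)
      (hTpd.eigenvalues_pos i) hh1 (hrange i) hr hr1 hrh1 hv0 hv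
    dsimp only
    rw [hc2]
    linarith
  -- the key matrix identity
  have key : anabla v A B
      - (((2 * (1 - v) : ℝ) : ℂ) • (anabla (1 / 2) A B - asharp (1 / 2) A B)
        + ((r1 : ℝ) : ℂ) • (asharp (1 / 2) A B - (2 : ℂ) • asharp (3 / 4) A B + B)
        + ((c2 : ℝ) : ℂ) • asharp v A B)
      = P * cdiag hTH gfun * P := by
    rw [hsharp (1/2), hsharp (3/4), hsharp v]
    unfold anabla
    rw [hAe, hBe]
    simp only [smul_sub, smul_add, conjc_two hTH P, conjc_smul hTH P, conjc_add hTH P,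
      conjc_sub hTH P]
    exact congrArg (fun f => P * cdiag hTH f * P) (by rw [hgfun]; funext i; ring)
  unfold loewner
  rw [key]
  have hpsd := (cdiag_posSemidef hTH hg).mul_mul_conjTranspose_same P
  rwa [hPH.eq] at hpsd
end
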